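/- arXiv:1906.10609 — 11 statements merged into one kernel-verified Lean document; each statement's English description precedes it below -/
import Mathlib

section
/- Let H be a Hilbert space, let M and N be closed subspaces of H with M ∩ N = {0}, and define c₀(M,N) = sup{ |⟨x,y⟩| : x ∈ M, y ∈ N, ‖x‖ ≤ 1, ‖y‖ ≤ 1 }. If c₀(M,N) < 1 then M + N is closed. -/
/-- The cosine of the Dixmier angle between two closed subspaces. -/
noncomputable def dixmierC0 {H : Type*} [NormedAddCommGroup H] [InnerProductSpace ℂ H]
    (M N : Submodule ℂ H) : ℝ :=
  sSup {r : ℝ | ∃ x ∈ M, ∃ y ∈ N, ‖x‖ ≤ 1 ∧ ‖y‖ ≤ 1 ∧ r = ‖(inner ℂ x y : ℂ)‖}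

lemma dixmierC0_nonneg {H : Type*} [NormedAddCommGroup H] [InnerProductSpace ℂ H]
    (M N : Submodule ℂ H) : 0 ≤ dixmierC0 M N := by
  have hmem : (0 : ℝ) ∈ {r : ℝ | ∃ x ∈ M, ∃ y ∈ N, ‖x‖ ≤ 1 ∧ ‖y‖ ≤ 1 ∧ r = ‖(inner ℂ x y : ℂ)‖} :=
    ⟨0, M.zero_mem, 0, N.zero_mem, by simp, by simp, by simp⟩
  have hbdd : BddAbove {r : ℝ | ∃ x ∈ M, ∃ y ∈ N, ‖x‖ ≤ 1 ∧ ‖y‖ ≤ 1 ∧ r = ‖(inner ℂ x y : ℂ)‖} := by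
    refine ⟨1, ?_⟩
    rintro r ⟨x, -, y, -, hx, hy, rfl⟩
    calc ‖(inner ℂ x y : ℂ)‖ ≤ ‖x‖ * ‖y‖ := norm_inner_le_norm x y
    _ ≤ 1 * 1 := mul_le_mul hx hy (norm_nonneg _) zero_le_one
    _ = 1 := by ring
  exact le_csSup hbdd hmem

lemma dixmierC0_inner_le {H : Type*} [NormedAddCommGroup H] [InnerProductSpace ℂ H]
    (M N : Submodule ℂ H) {x y : H} (hx : x ∈ M) (hy : y ∈ N) :
    ‖(inner ℂ x y : ℂ)‖ ≤ dixmierC0 M N * ‖x‖ * ‖y‖ := by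
  have hbdd : BddAbove {r : ℝ | ∃ x ∈ M, ∃ y ∈ N, ‖x‖ ≤ 1 ∧ ‖y‖ ≤ 1 ∧ r = ‖(inner ℂ x y : ℂ)‖} := by
    refine ⟨1, ?_⟩
    rintro r ⟨x, -, y, -, hx, hy, rfl⟩
    calc ‖(inner ℂ x y : ℂ)‖ ≤ ‖x‖ * ‖y‖ := norm_inner_le_norm x y
    _ ≤ 1 * 1 := mul_le_mul hx hy (norm_nonneg _) zero_le_one
    _ = 1 := by ring
  rcases eq_or_ne x 0 with rfl | hx0
  · simp [mul_nonneg (mul_nonneg (dixmierC0_nonneg M N) (norm_nonneg _)) (norm_nonneg _)]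
  rcases eq_or_ne y 0 with rfl | hy0
  · simp [mul_nonneg (mul_nonneg (dixmierC0_nonneg M N) (norm_nonneg _)) (norm_nonneg _)]
  have hxn : (0:ℝ) < ‖x‖ := norm_pos_iff.mpr hx0
  have hyn : (0:ℝ) < ‖y‖ := norm_pos_iff.mpr hy0
  have hmem : ‖(inner ℂ ((‖x‖:ℂ)⁻¹ • x) ((‖y‖:ℂ)⁻¹ • y) : ℂ)‖ ∈
      {r : ℝ | ∃ x ∈ M, ∃ y ∈ N, ‖x‖ ≤ 1 ∧ ‖y‖ ≤ 1 ∧ r = ‖(inner ℂ x y : ℂ)‖} := by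
    refine ⟨(‖x‖:ℂ)⁻¹ • x, M.smul_mem _ hx, (‖y‖:ℂ)⁻¹ • y, N.smul_mem _ hy, ?_, ?_, rfl⟩
    · simp [norm_smul, inv_mul_cancel₀ hxn.ne']
    · simp [norm_smul, inv_mul_cancel₀ hyn.ne']
  have hle := le_csSup hbdd hmem
  have : ‖(inner ℂ ((‖x‖:ℂ)⁻¹ • x) ((‖y‖:ℂ)⁻¹ • y) : ℂ)‖ = ‖x‖⁻¹ * ‖y‖⁻¹ * ‖(inner ℂ x y : ℂ)‖ := by
    rw [inner_smul_left, inner_smul_right]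
    simp [norm_mul, mul_assoc]
  rw [this] at hle
  have h := mul_le_mul_of_nonneg_right hle (le_of_lt (mul_pos hxn hyn))
  calc ‖(inner ℂ x y : ℂ)‖ = ‖x‖⁻¹ * ‖y‖⁻¹ * ‖(inner ℂ x y : ℂ)‖ * (‖x‖ * ‖y‖) := by
        field_simp
  _ ≤ dixmierC0 M N * (‖x‖ * ‖y‖) := h
  _ = dixmierC0 M N * ‖x‖ * ‖y‖ := by ring

set_option maxHeartbeats 1000000 in
/-- Lemma L07, one direction: if `M ∩ N = 0` and the Dixmier angle between `M`
and `N` is positive (`c₀(M,N) < 1`), then `M + N` is closed. -/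
theorem stmt_2 {H : Type*} [NormedAddCommGroup H] [InnerProductSpace ℂ H] [CompleteSpace H]
    (M N : Submodule ℂ H) (hM : IsClosed (M : Set H)) (hN : IsClosed (N : Set H))
    (hMN : M ⊓ N = ⊥) (hc : dixmierC0 M N < 1) :
    IsClosed ((M ⊔ N : Submodule ℂ H) : Set H) := by
  set c := dixmierC0 M N with hcdef
  have hc0 : 0 ≤ c := dixmierC0_nonneg M N
  -- key norm inequality
  have key : ∀ x ∈ M, ∀ y ∈ N, (1 - c) * (‖x‖ ^ 2 + ‖y‖ ^ 2) ≤ ‖x + y‖ ^ 2 := by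
    intro x hx y hy
    have h1 : ‖(inner ℂ x y : ℂ)‖ ≤ c * ‖x‖ * ‖y‖ := dixmierC0_inner_le M N hx hy
    have h2 : ‖x + y‖ ^ 2 = ‖x‖ ^ 2 + 2 * Complex.re (inner ℂ x y : ℂ) + ‖y‖ ^ 2 := by
      exact_mod_cast @norm_add_sq ℂ _ _ _ _ x y
    have h3 : -(c * ‖x‖ * ‖y‖) ≤ Complex.re (inner ℂ x y : ℂ) := by
      have h4 : |Complex.re (inner ℂ x y : ℂ)| ≤ ‖(inner ℂ x y : ℂ)‖ := by
        exact Complex.abs_re_le_norm _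
      have h5 := neg_abs_le (Complex.re (inner ℂ x y : ℂ))
      linarith
    nlinarith [sq_nonneg (‖x‖ - ‖y‖), norm_nonneg x, norm_nonneg y]
  -- the addition map from M × N to H
  have : CompleteSpace M := hM.completeSpace_coe
  have : CompleteSpace N := hN.completeSpace_coe
  set f : (M × N) →L[ℂ] H := (M.subtypeL).coprod (N.subtypeL) with hf
  have hrange : Set.range f = ((M ⊔ N : Submodule ℂ H) : Set H) := by
    ext z
    constructor
    · rintro ⟨⟨x, y⟩, rfl⟩
      exact Submodule.add_mem_sup x.2 y.2
    · intro hz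
      rcases Submodule.mem_sup.mp hz with ⟨x, hx, y, hy, rfl⟩
      exact ⟨(⟨x, hx⟩, ⟨y, hy⟩), rfl⟩
  have h1c : (0:ℝ) < 1 - c := by linarith
  have hsq : (0:ℝ) < Real.sqrt (1 - c) := Real.sqrt_pos.mpr h1c
  have anti : AntilipschitzWith ((Real.sqrt (1 - c))⁻¹).toNNReal f := by
    refine f.antilipschitz_of_bound ?_
    rintro ⟨x, y⟩
    have hkey := key x x.2 y y.2
    have hxy : ‖(⟨x, y⟩ : M × N)‖ = max ‖x‖ ‖y‖ := Prod.norm_def _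
    have hmax : (max ‖x‖ ‖y‖) ^ 2 ≤ ‖x‖ ^ 2 + ‖y‖ ^ 2 := by
      rcases max_cases ‖x‖ ‖y‖ with ⟨h, -⟩ | ⟨h, -⟩ <;> rw [h] <;>
        nlinarith [sq_nonneg ‖(x:H)‖, sq_nonneg ‖(y:H)‖]
    have hfxy : f (⟨x, y⟩ : M × N) = (x : H) + (y : H) := by
      simp [hf]
    rw [hfxy, hxy]
    have hnx : ‖x‖ = ‖(x : H)‖ := rfl
    have hny : ‖y‖ = ‖(y : H)‖ := rfl
    rw [hnx, hny] at hmax ⊢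
    have hle : (max ‖(x:H)‖ ‖(y:H)‖) ^ 2 ≤ ((Real.sqrt (1 - c))⁻¹ * ‖(x : H) + (y : H)‖) ^ 2 := by
      rw [mul_pow, inv_pow, Real.sq_sqrt h1c.le]
      rw [inv_mul_eq_div, le_div_iff₀ h1c]
      nlinarith
    have hcoe : (((Real.sqrt (1 - c))⁻¹).toNNReal : ℝ) = (Real.sqrt (1 - c))⁻¹ :=
      Real.coe_toNNReal _ (by positivity)
    rw [hcoe]
    calc max ‖(x:H)‖ ‖(y:H)‖ = Real.sqrt ((max ‖(x:H)‖ ‖(y:H)‖) ^ 2) :=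
          (Real.sqrt_sq (by positivity)).symm
    _ ≤ Real.sqrt (((Real.sqrt (1 - c))⁻¹ * ‖(x : H) + (y : H)‖) ^ 2) := Real.sqrt_le_sqrt hle
    _ = (Real.sqrt (1 - c))⁻¹ * ‖(x : H) + (y : H)‖ := Real.sqrt_sq (by positivity)
  have := anti.isClosed_range f.uniformContinuous
  rwa [hrange] at this
end

section
/- Let H be a Hilbert space, let M and N be closed subspaces of H with M ∩ N = {0}. If M + N is closed, then c₀(M,N) = sup{ |⟨x,y⟩| : x ∈ M, y ∈ N, ‖x‖ ≤ 1, ‖y‖ ≤ 1 } < 1, i.e. the Dixmier angle between M and N is positive. -/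
set_option maxHeartbeats 2000000 in
/-- Lemma L07, converse direction: if `M ∩ N = 0` and `M + N` is closed, then the
Dixmier angle between `M` and `N` is positive, i.e. `c₀(M,N) < 1`. -/
theorem stmt_3 {H : Type*} [NormedAddCommGroup H] [InnerProductSpace ℂ H] [CompleteSpace H]
    (M N : Submodule ℂ H) (hM : IsClosed (M : Set H)) (hN : IsClosed (N : Set H))
    (hMN : M ⊓ N = ⊥) (hsum : IsClosed ((M ⊔ N : Submodule ℂ H) : Set H)) :
    dixmierC0 M N < 1 := by
  set S : Submodule ℂ H := M ⊔ N with hS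
  haveI : CompleteSpace S := hsum.completeSpace_coe
  set M' : Submodule ℂ S := M.comap S.subtype with hM'def
  set N' : Submodule ℂ S := N.comap S.subtype with hN'def
  have hM' : IsClosed (M' : Set S) := hM.preimage continuous_subtype_val
  have hN' : IsClosed (N' : Set S) := hN.preimage continuous_subtype_val
  have hcompl : IsCompl M' N' := by
    constructor
    · rw [disjoint_iff, hM'def, hN'def, ← Submodule.comap_inf, hMN, Submodule.comap_bot,
        Submodule.ker_subtype]
    · rw [codisjoint_iff, eq_top_iff]
      rintro ⟨z, hz⟩ -
      obtain ⟨x, hx, y, hy, hxy⟩ := Submodule.mem_sup.1 hz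
      have hxS : x ∈ S := Submodule.mem_sup_left hx
      have hyS : y ∈ S := Submodule.mem_sup_right hy
      have : (⟨z, hz⟩ : S) = ⟨x, hxS⟩ + ⟨y, hyS⟩ := by
        ext; simp [← hxy]
      rw [this]
      exact Submodule.add_mem_sup (by simpa [hM'def] using hx) (by simpa [hN'def] using hy)
  set e := M'.prodEquivOfClosedCompl N' hcompl hM' hN' with he
  obtain ⟨C, hC1, hC⟩ : ∃ C : ℝ, 1 ≤ C ∧ ∀ z : S, ‖e.symm z‖ ≤ C * ‖z‖ := by
    refine ⟨max 1 ‖(e.symm : S →L[ℂ] M' × N')‖, le_max_left _ _, fun z => ?_⟩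
    calc ‖e.symm z‖ ≤ ‖(e.symm : S →L[ℂ] M' × N')‖ * ‖z‖ :=
          (e.symm : S →L[ℂ] M' × N').le_opNorm z
      _ ≤ _ := by gcongr; exact le_max_right _ _
  -- key estimate: for x ∈ M, y ∈ N, max ‖x‖ ‖y‖ ≤ C * ‖x - y‖
  have key : ∀ x ∈ M, ∀ y ∈ N, max ‖x‖ ‖y‖ ≤ C * ‖x - y‖ := by
    intro x hx y hy
    have hxS : x ∈ S := Submodule.mem_sup_left hx
    have hyS : (-y) ∈ S := Submodule.mem_sup_right (N.neg_mem hy)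
    set z : S := ⟨x, hxS⟩ + ⟨-y, hyS⟩ with hz
    have hsymm : e.symm z = (⟨(⟨x, hxS⟩ : S), hx⟩, ⟨(⟨-y, hyS⟩ : S), N.neg_mem hy⟩) := by
      rw [ContinuousLinearEquiv.symm_apply_eq]
      rfl
    have h1 := hC z
    rw [hsymm] at h1
    have hnorm : ‖((⟨(⟨x, hxS⟩ : S), hx⟩, ⟨(⟨-y, hyS⟩ : S), N.neg_mem hy⟩) :
        M' × N')‖ = max ‖x‖ ‖y‖ := by
      simp [Prod.norm_def, Submodule.norm_coe]
    have hzn : ‖z‖ = ‖x - y‖ := by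
      simp [hz, AddMemClass.mk_add_mk, sub_eq_add_neg]
    rw [hnorm, hzn] at h1
    exact h1
  -- now the inner product bound
  have hC0 : (0:ℝ) < C := lt_of_lt_of_le one_pos hC1
  clear_value e
  clear hC he e
  have bound : ∀ x ∈ M, ∀ y ∈ N, ‖x‖ ≤ 1 → ‖y‖ ≤ 1 →
      ‖(inner ℂ x y : ℂ)‖ ≤ 1 - 1 / (2 * C ^ 2) := by
    intro x hx y hy hx1 hy1
    set t : ℂ := inner ℂ x y with ht
    set a : ℂ := if t = 0 then 1 else (‖t‖ : ℂ) / t with ha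
    have hat : a * t = (‖t‖ : ℂ) := by
      by_cases h : t = 0 <;> simp [ha, h, div_mul_cancel₀]
    have hanorm : ‖a‖ = 1 := by
      by_cases h : t = 0 <;> simp [ha, h, norm_div, norm_ne_zero_iff]
    set y' : H := a • y with hy'
    have hy'N : y' ∈ N := N.smul_mem a hy
    have hy'n : ‖y'‖ = ‖y‖ := by simp [hy', norm_smul, hanorm]
    have hinner : (inner ℂ x y' : ℂ) = (‖t‖ : ℂ) := by
      rw [hy', inner_smul_right, ← ht, hat]
    have hre : RCLike.re (inner ℂ x y' : ℂ) = ‖t‖ := by rw [hinner]; simp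
    have hsq : ‖x - y'‖ ^ 2 = ‖x‖ ^ 2 - 2 * ‖t‖ + ‖y‖ ^ 2 := by
      rw [@norm_sub_sq ℂ, hre, hy'n]
    have hkey := key x hx y' hy'N
    rw [hy'n] at hkey
    set m : ℝ := max ‖x‖ ‖y‖ with hm
    have hm1 : m ≤ 1 := max_le hx1 hy1
    have hxm : ‖x‖ ≤ m := le_max_left _ _
    have hym : ‖y‖ ≤ m := le_max_right _ _
    have hm0 : 0 ≤ m := le_trans (norm_nonneg x) hxm
    have hsq2 : m ^ 2 ≤ C ^ 2 * ‖x - y'‖ ^ 2 := by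
      have := mul_self_le_mul_self hm0 hkey
      nlinarith [norm_nonneg (x - y')]
    have h1 : ‖x‖ ^ 2 ≤ m ^ 2 := by nlinarith [norm_nonneg x]
    have h2 : ‖y‖ ^ 2 ≤ m ^ 2 := by nlinarith [norm_nonneg y]
    have h3 : C ^ 2 * ‖x‖ ^ 2 ≤ C ^ 2 * m ^ 2 := by nlinarith [sq_nonneg C]
    have h4 : C ^ 2 * ‖y‖ ^ 2 ≤ C ^ 2 * m ^ 2 := by nlinarith [sq_nonneg C]
    have h5 : (0:ℝ) ≤ (1 - m ^ 2) * (2 * C ^ 2 - 1) := by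
      apply mul_nonneg <;> nlinarith
    have hfin : 2 * C ^ 2 * ‖t‖ ≤ 2 * C ^ 2 - 1 := by nlinarith
    have h2C2 : (0:ℝ) < 2 * C ^ 2 := by positivity
    have h6 : ‖t‖ ≤ (2 * C ^ 2 - 1) / (2 * C ^ 2) := by
      rw [le_div_iff₀ h2C2]; linarith
    have heq : (2 * C ^ 2 - 1) / (2 * C ^ 2) = 1 - 1 / (2 * C ^ 2) := by
      field_simp
    linarith
  have h2C : 0 < 1 / (2 * C ^ 2) := by positivity
  have : dixmierC0 M N ≤ 1 - 1 / (2 * C ^ 2) := by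
    apply Real.sSup_le
    · rintro r ⟨x, hx, y, hy, hx1, hy1, rfl⟩
      exact bound x hx y hy hx1 hy1
    · have h1 : (1:ℝ) ≤ 2 * C ^ 2 := by nlinarith
      have h2 : 1 / (2 * C ^ 2) ≤ 1 := by
        rw [div_le_one (by positivity)]; linarith
      linarith
  linarith
end

section
/- Let H be a Hilbert space, M, N closed subspaces with M ∩ N = {0} and c₀(M,N) = δ < 1. Then there is a constant C = 1 + δ/(1−δ) such that for all x ∈ M and y ∈ N with ‖x + y‖ ≤ 1 one has ‖x‖ ≤ C. -/
/-- Quantitative estimate from the proof of Lemma L07: if `M ∩ N = 0` and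
`c₀(M,N) = δ < 1`, then `‖x + y‖ ≤ 1` with `x ∈ M`, `y ∈ N` forces
`‖x‖ ≤ 1 + δ/(1-δ)`. -/
theorem stmt_4 {H : Type*} [NormedAddCommGroup H] [InnerProductSpace ℂ H] [CompleteSpace H]
    (M N : Submodule ℂ H) (hM : IsClosed (M : Set H)) (hN : IsClosed (N : Set H))
    (hMN : M ⊓ N = ⊥) (δ : ℝ) (hδ : dixmierC0 M N = δ) (hδ1 : δ < 1) :
    ∀ x ∈ M, ∀ y ∈ N, ‖x + y‖ ≤ 1 → ‖x‖ ≤ 1 + δ / (1 - δ) := by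
  rw [dixmierC0] at hδ
  set S : Set ℝ := {r : ℝ | ∃ x ∈ M, ∃ y ∈ N, ‖x‖ ≤ 1 ∧ ‖y‖ ≤ 1 ∧ r = ‖(inner ℂ x y : ℂ)‖}
    with hS
  have hbdd : BddAbove S := by
    refine ⟨1, ?_⟩
    rintro r ⟨x, hx, y, hy, hx1, hy1, rfl⟩
    calc ‖(inner ℂ x y : ℂ)‖ ≤ ‖x‖ * ‖y‖ := norm_inner_le_norm x y
      _ ≤ 1 * 1 := by exact mul_le_mul hx1 hy1 (norm_nonneg _) zero_le_one
      _ = 1 := by ring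
  have h0 : (0 : ℝ) ∈ S := ⟨0, M.zero_mem, 0, N.zero_mem, by simp, by simp, by simp⟩
  have hδ0 : 0 ≤ δ := hδ ▸ le_csSup hbdd h0
  have key : ∀ x ∈ M, ∀ y ∈ N, ‖(inner ℂ x y : ℂ)‖ ≤ δ * (‖x‖ * ‖y‖) := by
    intro x hx y hy
    rcases eq_or_ne x 0 with rfl | hx0
    · simp
    rcases eq_or_ne y 0 with rfl | hy0
    · simp
    have hxn : (0:ℝ) < ‖x‖ := norm_pos_iff.mpr hx0
    have hyn : (0:ℝ) < ‖y‖ := norm_pos_iff.mpr hy0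
    have hmem : ‖(inner ℂ x y : ℂ)‖ / (‖x‖ * ‖y‖) ∈ S := by
      refine ⟨((‖x‖:ℂ)⁻¹) • x, M.smul_mem _ hx, ((‖y‖:ℂ)⁻¹) • y, N.smul_mem _ hy, ?_, ?_, ?_⟩
      · simp [norm_smul, hxn.ne']
      · simp [norm_smul, hyn.ne']
      · rw [inner_smul_left, inner_smul_right]
        simp [norm_mul, div_eq_mul_inv, mul_inv]
        ring
    have := le_csSup hbdd hmem
    rw [hδ] at this
    rw [div_le_iff₀ (by positivity)] at this
    linarith [this]
  intro x hx y hy hxy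
  have hx2 : ‖x‖ ^ 2 ≤ ‖x‖ + δ * (‖x‖ * ‖y‖) := by
    have e : (inner ℂ x (x + y) : ℂ) = (‖x‖:ℂ)^2 + inner ℂ x y := by
      rw [inner_add_right, inner_self_eq_norm_sq_to_K]; norm_cast
    have h1 : ‖(inner ℂ x (x+y) : ℂ)‖ ≤ ‖x‖ := by
      calc ‖(inner ℂ x (x+y) : ℂ)‖ ≤ ‖x‖ * ‖x + y‖ := norm_inner_le_norm _ _
        _ ≤ ‖x‖ * 1 := by exact mul_le_mul_of_nonneg_left hxy (norm_nonneg _)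
        _ = ‖x‖ := mul_one _
    have h2 : ‖x‖^2 = ‖((‖x‖:ℂ)^2 : ℂ)‖ := by
      simp [norm_pow]
    have e2 : ((‖x‖:ℝ)^2 : ℂ) = (inner ℂ x (x+y) : ℂ) - inner ℂ x y := by
      rw [e]; push_cast; ring
    calc ‖x‖^2 = ‖(inner ℂ x (x+y) : ℂ) - inner ℂ x y‖ := by
          rw [← e2, h2]
      _ ≤ ‖(inner ℂ x (x+y) : ℂ)‖ + ‖(inner ℂ x y : ℂ)‖ := norm_sub_le _ _
      _ ≤ ‖x‖ + δ * (‖x‖ * ‖y‖) := add_le_add h1 (key x hx y hy)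
  have hy2 : ‖y‖ ^ 2 ≤ ‖y‖ + δ * (‖x‖ * ‖y‖) := by
    have e : (inner ℂ y (x + y) : ℂ) = inner ℂ y x + (‖y‖:ℂ)^2 := by
      rw [inner_add_right, inner_self_eq_norm_sq_to_K]; norm_cast
    have h1 : ‖(inner ℂ y (x+y) : ℂ)‖ ≤ ‖y‖ := by
      calc ‖(inner ℂ y (x+y) : ℂ)‖ ≤ ‖y‖ * ‖x + y‖ := norm_inner_le_norm _ _
        _ ≤ ‖y‖ * 1 := by exact mul_le_mul_of_nonneg_left hxy (norm_nonneg _)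
        _ = ‖y‖ := mul_one _
    have h2 : ‖y‖^2 = ‖((‖y‖:ℂ)^2 : ℂ)‖ := by simp [norm_pow]
    have hyx : ‖(inner ℂ y x : ℂ)‖ ≤ δ * (‖x‖ * ‖y‖) := by
      have := key x hx y hy
      rwa [← inner_conj_symm, RCLike.norm_conj] at this
    have e2 : ((‖y‖:ℝ)^2 : ℂ) = (inner ℂ y (x+y) : ℂ) - inner ℂ y x := by
      rw [e]; push_cast; ring
    calc ‖y‖^2 = ‖(inner ℂ y (x+y) : ℂ) - inner ℂ y x‖ := by
          rw [← e2, h2]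
      _ ≤ ‖(inner ℂ y (x+y) : ℂ)‖ + ‖(inner ℂ y x : ℂ)‖ := norm_sub_le _ _
      _ ≤ ‖y‖ + δ * (‖x‖ * ‖y‖) := add_le_add h1 hyx
  -- From hx2: ‖x‖ ≤ 1 + δ‖y‖ (if x ≠ 0); from hy2: ‖y‖ ≤ 1 + δ‖x‖
  have hxb : ‖x‖ ≤ 1 + δ * ‖y‖ := by
    rcases eq_or_lt_of_le (norm_nonneg x) with h | h
    · have := mul_nonneg hδ0 (norm_nonneg y); linarith [h.symm.le]
    · nlinarith [hxy, norm_nonneg y]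
  have hyb : ‖y‖ ≤ 1 + δ * ‖x‖ := by
    rcases eq_or_lt_of_le (norm_nonneg y) with h | h
    · have := mul_nonneg hδ0 (norm_nonneg x); linarith [h.symm.le]
    · nlinarith [norm_nonneg x]
  have goal_eq : 1 + δ / (1 - δ) = 1 / (1 - δ) := by
    have h1δ : (1:ℝ) - δ ≠ 0 := by linarith
    field_simp
    ring
  rw [goal_eq]
  rw [le_div_iff₀ (by linarith)]
  nlinarith [norm_nonneg x, norm_nonneg y]
end

section
/- Let H be a Hilbert space and F, D bounded operators on H with Im F, Im D and Im(D∘F) closed. Then the kernel of D∘F is isomorphic (as a Hilbert space, i.e. there is a bounded linear isomorphism) to a closed subspace of ker D ⊕ ker F; more precisely, ker(D∘F) = ker F ⊕' W (internal direct sum with a closed subspace W) where W is isomorphic to ker D ∩ Im F. -/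
/-- Kernel half of Lemma L06 (Hilbert space case): if `Im F`, `Im D`, `Im (D∘F)`
are closed then `ker (D∘F) = ker F ⊕ W` (internal direct sum with a closed
subspace `W`) where `W` is isomorphic, via a continuous linear equivalence, to
`ker D ∩ Im F`. In particular `ker (D∘F)` is isomorphic to a closed subspace of
`ker D ⊕ ker F`. -/
theorem stmt_5 {H : Type*} [NormedAddCommGroup H] [InnerProductSpace ℂ H] [CompleteSpace H]
    (F D : H →L[ℂ] H)
    (hF : IsClosed ((LinearMap.range (F : H →ₗ[ℂ] H) : Submodule ℂ H) : Set H))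
    (hD : IsClosed ((LinearMap.range (D : H →ₗ[ℂ] H) : Submodule ℂ H) : Set H))
    (hDF : IsClosed ((LinearMap.range (D.comp F : H →ₗ[ℂ] H) : Submodule ℂ H) : Set H)) :
    ∃ W : Submodule ℂ H, IsClosed (W : Set H) ∧
      Disjoint (LinearMap.ker (F : H →ₗ[ℂ] H)) W ∧
      LinearMap.ker (F : H →ₗ[ℂ] H) ⊔ W = LinearMap.ker (D.comp F : H →ₗ[ℂ] H) ∧
      Nonempty (W ≃L[ℂ] (LinearMap.ker (D : H →ₗ[ℂ] H) ⊓ LinearMap.range (F : H →ₗ[ℂ] H) : Submodule ℂ H)) := by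
  classical
  set K : Submodule ℂ H := LinearMap.ker (F : H →ₗ[ℂ] H)
  set W : Submodule ℂ H := Kᗮ ⊓ LinearMap.ker (D.comp F : H →ₗ[ℂ] H) with hWdef
  have hKclosed : IsClosed (K : Set H) := ContinuousLinearMap.isClosed_ker F
  haveI : CompleteSpace K := hKclosed.completeSpace_coe
  have hWclosed : IsClosed (W : Set H) :=
    (Submodule.isClosed_orthogonal K).inter (ContinuousLinearMap.isClosed_ker (D.comp F))
  have hKsub : K ≤ LinearMap.ker (D.comp F : H →ₗ[ℂ] H) := by
    intro x hx
    simp only [LinearMap.mem_ker, ContinuousLinearMap.coe_coe, ContinuousLinearMap.coe_comp', Function.comp_apply] at *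
    rw [show F x = 0 from hx, map_zero]
  have hdisj : Disjoint K W := by
    rw [Submodule.disjoint_def]
    intro x hxK hxW
    exact inner_self_eq_zero.mp ((Submodule.mem_orthogonal' K x).mp hxW.1 x hxK)
  have hsup : K ⊔ W = LinearMap.ker (D.comp F : H →ₗ[ℂ] H) := by
    apply le_antisymm
    · exact sup_le hKsub inf_le_right
    · intro x hx
      obtain ⟨y, hy, z, hz, hxyz⟩ := K.exists_add_mem_mem_orthogonal x
      have hzW : z ∈ W := by
        refine ⟨hz, ?_⟩
        have : z = x - y := by rw [hxyz]; abel
        rw [this]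
        exact Submodule.sub_mem _ hx (hKsub hy)
      rw [hxyz]
      exact Submodule.add_mem _ (Submodule.mem_sup_left hy) (Submodule.mem_sup_right hzW)
  refine ⟨W, hWclosed, hdisj, hsup, ?_⟩
  -- build the continuous linear equiv W ≃L ker D ⊓ range F via F
  set T : Submodule ℂ H := LinearMap.ker (D : H →ₗ[ℂ] H) ⊓ LinearMap.range (F : H →ₗ[ℂ] H) with hTdef
  have hTclosed : IsClosed (T : Set H) := (ContinuousLinearMap.isClosed_ker D).inter hF
  haveI : CompleteSpace W := hWclosed.completeSpace_coe
  haveI : CompleteSpace T := hTclosed.completeSpace_coe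
  have hmapsto : ∀ x : W, F (x : H) ∈ T := by
    intro ⟨x, hx⟩
    refine ⟨?_, ⟨x, rfl⟩⟩
    have := hx.2
    simpa using this
  let f : W →L[ℂ] T :=
    { toFun := fun x => ⟨F (x : H), hmapsto x⟩
      map_add' := by intro x y; ext; simp
      map_smul' := by intro c x; ext; simp
      cont := by
        apply Continuous.subtype_mk
        exact F.continuous.comp continuous_subtype_val }
  have hinj : LinearMap.ker (f : W →ₗ[ℂ] T) = ⊥ := by
    rw [LinearMap.ker_eq_bot']
    intro ⟨x, hx⟩ hfx
    have hxK : x ∈ K := by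
      have : F x = 0 := congrArg Subtype.val hfx
      exact this
    have : x = 0 := inner_self_eq_zero.mp ((Submodule.mem_orthogonal' K x).mp hx.1 x hxK)
    exact Subtype.ext this
  have hsurj : LinearMap.range (f : W →ₗ[ℂ] T) = ⊤ := by
    rw [LinearMap.range_eq_top]
    intro ⟨y, hyD, x, hxy⟩
    have hxker : x ∈ LinearMap.ker (D.comp F : H →ₗ[ℂ] H) := by
      simp only [LinearMap.mem_ker, ContinuousLinearMap.coe_coe, ContinuousLinearMap.coe_comp', Function.comp_apply]
      rw [show F x = y from hxy]
      simpa using hyD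
    obtain ⟨p, hp, q, hq, hxpq⟩ := K.exists_add_mem_mem_orthogonal x
    have hqW : q ∈ W := by
      refine ⟨hq, ?_⟩
      have : q = x - p := by rw [hxpq]; abel
      rw [this]
      exact Submodule.sub_mem _ hxker (hKsub hp)
    refine ⟨⟨q, hqW⟩, ?_⟩
    apply Subtype.ext
    show F q = y
    have hFp : F p = 0 := hp
    calc F q = F p + F q := by rw [hFp, zero_add]
      _ = F (p + q) := by rw [map_add]
      _ = y := by rw [← hxpq]; exact hxy
  exact ⟨ContinuousLinearEquiv.ofBijective f hinj hsurj⟩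
end

section
/- Let H be a Hilbert space and F, D bounded operators on H with Im F, Im D and Im(D∘F) closed. Then (Im(D∘F))^⊥ embeds as a closed subspace, via a bounded linear isomorphism onto its image, into (Im F)^⊥ ⊕ (Im D)^⊥. In particular, if H is finite-dimensional or the complements are finite-dimensional, dim (Im DF)^⊥ ≤ dim (Im F)^⊥ + dim (Im D)^⊥. -/
local notation "⟪" x ", " y "⟫" => @inner ℂ _ _ x y

/-- Cokernel half of Lemma L06 (Hilbert space case): if `Im F`, `Im D`,
`Im (D∘F)` are closed, then `(Im (D∘F))ᗮ` embeds, via a bounded linear map which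
is injective with closed range, into `(Im F)ᗮ ⊕ (Im D)ᗮ`; in particular the
(cardinal) dimension inequality holds. -/
theorem stmt_6 {H : Type*} [NormedAddCommGroup H] [InnerProductSpace ℂ H] [CompleteSpace H]
    (F D : H →L[ℂ] H)
    (hF : IsClosed ((LinearMap.range (F : H →ₗ[ℂ] H) : Submodule ℂ H) : Set H))
    (hD : IsClosed ((LinearMap.range (D : H →ₗ[ℂ] H) : Submodule ℂ H) : Set H))
    (hDF : IsClosed ((LinearMap.range ((D.comp F : H →L[ℂ] H) : H →ₗ[ℂ] H) : Submodule ℂ H) : Set H)) :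
    (∃ T : ((LinearMap.range ((D.comp F : H →L[ℂ] H) : H →ₗ[ℂ] H))ᗮ : Submodule ℂ H) →L[ℂ]
        (((LinearMap.range (F : H →ₗ[ℂ] H))ᗮ : Submodule ℂ H) × ((LinearMap.range (D : H →ₗ[ℂ] H))ᗮ : Submodule ℂ H)),
      Function.Injective T ∧ IsClosed (Set.range T)) ∧
    Module.rank ℂ ((LinearMap.range ((D.comp F : H →L[ℂ] H) : H →ₗ[ℂ] H))ᗮ : Submodule ℂ H) ≤
      Module.rank ℂ ((LinearMap.range (F : H →ₗ[ℂ] H))ᗮ : Submodule ℂ H) +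
        Module.rank ℂ ((LinearMap.range (D : H →ₗ[ℂ] H))ᗮ : Submodule ℂ H) := by
  classical
  haveI : CompleteSpace (LinearMap.range (D : H →ₗ[ℂ] H)) := hD.completeSpace_coe
  set K : Submodule ℂ H := (LinearMap.range ((D.comp F : H →L[ℂ] H) : H →ₗ[ℂ] H))ᗮ with hK
  set Dadj := ContinuousLinearMap.adjoint D with hDadj
  have hmemA : ∀ x : K, Dadj (x : H) ∈ (LinearMap.range (F : H →ₗ[ℂ] H))ᗮ := by
    intro x
    rw [Submodule.mem_orthogonal]
    rintro u ⟨y, rfl⟩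
    have hx : (x : H) ∈ (LinearMap.range ((D.comp F : H →L[ℂ] H) : H →ₗ[ℂ] H))ᗮ := x.2
    rw [Submodule.mem_orthogonal] at hx
    have h1 : ⟪F y, Dadj (x : H)⟫ = ⟪D (F y), (x : H)⟫ := by
      rw [hDadj, ContinuousLinearMap.adjoint_inner_right]
    rw [ContinuousLinearMap.coe_coe, h1]
    exact hx _ ⟨y, rfl⟩
  let A : K →L[ℂ] ((LinearMap.range (F : H →ₗ[ℂ] H))ᗮ : Submodule ℂ H) :=
    ((Dadj.comp (Submodule.subtypeL K)).codRestrict _ hmemA)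
  let B : K →L[ℂ] ((LinearMap.range (D : H →ₗ[ℂ] H))ᗮ : Submodule ℂ H) :=
    (Submodule.orthogonalProjectionOnto ((LinearMap.range (D : H →ₗ[ℂ] H))ᗮ)).comp (Submodule.subtypeL K)
  set T := A.prod B with hT
  -- open-mapping constant for D onto its range
  have hsurj : Function.Surjective (D.codRestrict (LinearMap.range (D : H →ₗ[ℂ] H))
      (fun x => LinearMap.mem_range_self _ x)) := by
    rintro ⟨z, y, rfl⟩
    exact ⟨y, rfl⟩
  obtain ⟨C, hC0, hC⟩ := ContinuousLinearMap.exists_preimage_norm_le _ hsurj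
  have key : ∀ v : H, v ∈ LinearMap.range (D : H →ₗ[ℂ] H) → ‖v‖ ≤ C * ‖Dadj v‖ := by
    intro v hv
    obtain ⟨y, hy, hny⟩ := hC ⟨v, hv⟩
    have hDy : D y = v := congrArg Subtype.val hy
    have h1 : ⟪v, v⟫ = ⟪y, Dadj v⟫ := by
      rw [hDadj, ContinuousLinearMap.adjoint_inner_right, hDy]
    have h2 : ‖v‖ ^ 2 = ‖⟪y, Dadj v⟫‖ := by
      rw [← h1, inner_self_eq_norm_sq_to_K]
      simp
    have h3 : ‖⟪y, Dadj v⟫‖ ≤ ‖y‖ * ‖Dadj v‖ := norm_inner_le_norm _ _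
    have hnyv : ‖y‖ ≤ C * ‖v‖ := by simpa using hny
    have h4 : ‖v‖ ^ 2 ≤ (C * ‖v‖) * ‖Dadj v‖ := by
      calc ‖v‖ ^ 2 = ‖⟪y, Dadj v⟫‖ := h2
      _ ≤ ‖y‖ * ‖Dadj v‖ := h3
      _ ≤ (C * ‖v‖) * ‖Dadj v‖ :=
          mul_le_mul_of_nonneg_right hnyv (norm_nonneg _)
    rcases eq_or_ne v 0 with rfl | hv0
    · simp only [norm_zero, map_zero, mul_zero, le_refl]
    · have hvpos : (0:ℝ) < ‖v‖ := norm_pos_iff.mpr hv0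
      have h5 : ‖v‖ * ‖v‖ ≤ (C * ‖Dadj v‖) * ‖v‖ := by
        calc ‖v‖ * ‖v‖ = ‖v‖ ^ 2 := (sq ‖v‖).symm
        _ ≤ (C * ‖v‖) * ‖Dadj v‖ := h4
        _ = (C * ‖Dadj v‖) * ‖v‖ := by ring
      exact le_of_mul_le_mul_right h5 hvpos
  have hbound : ∀ x : K, ‖x‖ ^ 2 ≤ (1 + C ^ 2) * ‖T x‖ ^ 2 := by
    intro x
    set u : H := (Submodule.orthogonalProjectionOnto ((LinearMap.range (D : H →ₗ[ℂ] H))ᗮ) (x : H) : H) with hu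
    set v : H := (x : H) - u with hv
    have horth : (x : H) - u ∈ (LinearMap.range (D : H →ₗ[ℂ] H))ᗮᗮ :=
      Submodule.sub_starProjection_mem_orthogonal (K := (LinearMap.range (D : H →ₗ[ℂ] H))ᗮ) (x : H)
    have hvmem : v ∈ LinearMap.range (D : H →ₗ[ℂ] H) := by
      have h := horth
      rwa [Submodule.orthogonal_orthogonal] at h
    have humem : u ∈ (LinearMap.range (D : H →ₗ[ℂ] H))ᗮ :=
      (Submodule.orthogonalProjectionOnto ((LinearMap.range (D : H →ₗ[ℂ] H))ᗮ) (x : H)).2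
    have huv : ⟪u, v⟫ = 0 := (Submodule.mem_orthogonal _ _).1 horth u humem
    have hx : (x : H) = u + v := by rw [hv]; abel
    have hnorm : ‖(x : H)‖ ^ 2 = ‖u‖ ^ 2 + ‖v‖ ^ 2 := by
      rw [hx, sq, sq, sq]
      exact norm_add_sq_eq_norm_sq_add_norm_sq_of_inner_eq_zero _ _ huv
    have hDu : Dadj u = 0 := by
      apply ext_inner_left ℂ
      intro w
      rw [hDadj, ContinuousLinearMap.adjoint_inner_right, inner_zero_right]
      exact (Submodule.mem_orthogonal _ _).1 humem _ (LinearMap.mem_range_self _ w)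
    have hDv : Dadj v = Dadj (x : H) := by
      have h' : Dadj (x : H) = Dadj u + Dadj v := by rw [hx, map_add]
      rw [h', hDu, zero_add]
    have hvb : ‖v‖ ≤ C * ‖Dadj (x : H)‖ := by rw [← hDv]; exact key v hvmem
    have hA : ‖A x‖ = ‖Dadj (x : H)‖ := rfl
    have hB : ‖B x‖ = ‖u‖ := rfl
    have hmax : ‖T x‖ = max ‖A x‖ ‖B x‖ := rfl
    have hTA : ‖A x‖ ≤ ‖T x‖ := by rw [hmax]; exact le_max_left _ _
    have hTB : ‖B x‖ ≤ ‖T x‖ := by rw [hmax]; exact le_max_right _ _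
    have hu2 : ‖u‖ ^ 2 ≤ ‖T x‖ ^ 2 := by
      rw [← hB]; exact pow_le_pow_left₀ (norm_nonneg _) hTB 2
    have hv2 : ‖v‖ ^ 2 ≤ C ^ 2 * ‖T x‖ ^ 2 := by
      calc ‖v‖ ^ 2 ≤ (C * ‖Dadj (x : H)‖) ^ 2 := pow_le_pow_left₀ (norm_nonneg _) hvb 2
      _ = C ^ 2 * ‖Dadj (x : H)‖ ^ 2 := by ring
      _ ≤ C ^ 2 * ‖T x‖ ^ 2 := by
          apply mul_le_mul_of_nonneg_left _ (sq_nonneg C)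
          rw [← hA]
          exact pow_le_pow_left₀ (norm_nonneg _) hTA 2
    have hxx : ‖(x : H)‖ = ‖x‖ := rfl
    rw [← hxx, hnorm]
    have hring : (1 + C ^ 2) * ‖T x‖ ^ 2 = ‖T x‖ ^ 2 + C ^ 2 * ‖T x‖ ^ 2 := by ring
    rw [hring]
    exact add_le_add hu2 hv2
  set c : ℝ := Real.sqrt (1 + C ^ 2) with hc
  have hc0 : 0 ≤ c := Real.sqrt_nonneg _
  have hanti : AntilipschitzWith ⟨c, hc0⟩ T := by
    apply T.antilipschitz_of_bound
    intro x
    have h := hbound x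
    have hsq : ‖x‖ ^ 2 ≤ (c * ‖T x‖) ^ 2 := by
      have hcsq : c ^ 2 = 1 + C ^ 2 := Real.sq_sqrt (by positivity)
      calc ‖x‖ ^ 2 ≤ (1 + C ^ 2) * ‖T x‖ ^ 2 := h
      _ = (c * ‖T x‖) ^ 2 := by rw [mul_pow, hcsq]
    have h2 := Real.sqrt_le_sqrt hsq
    rwa [Real.sqrt_sq (norm_nonneg _), Real.sqrt_sq (mul_nonneg hc0 (norm_nonneg _))] at h2
  constructor
  · exact ⟨T, hanti.injective, hanti.isClosed_range T.uniformContinuous⟩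
  · have h1 : Module.rank ℂ K ≤ Module.rank ℂ
        ((((LinearMap.range (F : H →ₗ[ℂ] H))ᗮ : Submodule ℂ H)) × (((LinearMap.range (D : H →ₗ[ℂ] H))ᗮ : Submodule ℂ H))) :=
      LinearMap.rank_le_of_injective (T : K →ₗ[ℂ] _) hanti.injective
    rw [rank_prod'] at h1
    exact h1
end

section
/- Let H be a Hilbert space and F, D bounded operators on H with Im F and Im D closed. Then Im(D∘F) is closed if and only if Im F + ker D is closed. -/
open Submodule

/-- If `D` has closed range, then `D` is bounded below on `(ker D)ᗮ`. -/
lemma aux_bounded_below {H : Type*} [NormedAddCommGroup H] [InnerProductSpace ℂ H]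
    [CompleteSpace H] (D : H →L[ℂ] H)
    (hD : IsClosed ((LinearMap.range (D : H →ₗ[ℂ] H) : Submodule ℂ H) : Set H)) :
    ∃ C > (0 : ℝ), ∀ x ∈ (LinearMap.ker (D : H →ₗ[ℂ] H) : Submodule ℂ H)ᗮ, ‖x‖ ≤ C * ‖D x‖ := by
  haveI : CompleteSpace (LinearMap.range (D : H →ₗ[ℂ] H) : Submodule ℂ H) := hD.completeSpace_coe
  set D' : H →L[ℂ] (LinearMap.range (D : H →ₗ[ℂ] H) : Submodule ℂ H) :=
    D.codRestrict _ (fun x => LinearMap.mem_range_self _ x) with hD'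
  have hsurj : Function.Surjective D' := by
    rintro ⟨y, x, rfl⟩
    exact ⟨x, rfl⟩
  obtain ⟨C, hC0, hC⟩ := ContinuousLinearMap.exists_preimage_norm_le D' hsurj
  refine ⟨C, hC0, fun x hx => ?_⟩
  obtain ⟨z, hz, hzn⟩ := hC (D' x)
  have hDz : D z = D x := congrArg Subtype.val hz
  have hker : z - x ∈ (LinearMap.ker (D : H →ₗ[ℂ] H) : Submodule ℂ H) := by
    simp [LinearMap.mem_ker, map_sub, hDz]
  have hinner : inner ℂ (z - x) x = (0 : ℂ) :=
    (Submodule.mem_orthogonal _ x).1 hx _ hker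
  have hpyth : ‖(z - x) + x‖ * ‖(z - x) + x‖ = ‖z - x‖ * ‖z - x‖ + ‖x‖ * ‖x‖ :=
    norm_add_sq_eq_norm_sq_add_norm_sq_of_inner_eq_zero _ _ hinner
  have hzx : (z - x) + x = z := by abel
  rw [hzx] at hpyth
  have hle : ‖x‖ ≤ ‖z‖ := by nlinarith [norm_nonneg z, norm_nonneg x, sq_nonneg ‖z - x‖]
  have hnorm : ‖D' x‖ = ‖D x‖ := rfl
  calc ‖x‖ ≤ ‖z‖ := hle
    _ ≤ C * ‖D' x‖ := hzn
    _ = C * ‖D x‖ := by rw [hnorm]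

/-- Closed-range composition criterion (Hilbert space case): if `Im F` and
`Im D` are closed, then `Im (D∘F)` is closed iff `Im F + ker D` is closed. -/
theorem stmt_7 {H : Type*} [NormedAddCommGroup H] [InnerProductSpace ℂ H] [CompleteSpace H]
    (F D : H →L[ℂ] H)
    (hF : IsClosed ((LinearMap.range (F : H →ₗ[ℂ] H) : Submodule ℂ H) : Set H))
    (hD : IsClosed ((LinearMap.range (D : H →ₗ[ℂ] H) : Submodule ℂ H) : Set H)) :
    IsClosed ((LinearMap.range ((D.comp F : H →L[ℂ] H) : H →ₗ[ℂ] H) : Submodule ℂ H) : Set H) ↔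
      IsClosed ((LinearMap.range (F : H →ₗ[ℂ] H) ⊔ LinearMap.ker (D : H →ₗ[ℂ] H) : Submodule ℂ H) : Set H) := by
  set K : Submodule ℂ H := LinearMap.ker (D : H →ₗ[ℂ] H) with hK
  haveI : CompleteSpace K := (ContinuousLinearMap.isClosed_ker D).completeSpace_coe
  set S : Submodule ℂ H := LinearMap.range (F : H →ₗ[ℂ] H) ⊔ K with hS
  -- key set equality: S = D ⁻¹' (range (D ∘ F))
  have hpre : (S : Set H) = D ⁻¹' ((LinearMap.range ((D.comp F : H →L[ℂ] H) : H →ₗ[ℂ] H) : Submodule ℂ H) : Set H) := by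
    ext x
    simp only [Set.mem_preimage, SetLike.mem_coe, LinearMap.mem_range,
      ContinuousLinearMap.coe_comp', Function.comp_apply]
    constructor
    · intro hx
      obtain ⟨r, hr, k, hk, rfl⟩ := Submodule.mem_sup.1 hx
      obtain ⟨a, rfl⟩ := LinearMap.mem_range.1 hr
      refine ⟨a, ?_⟩
      have hk0 : D k = 0 := LinearMap.mem_ker.1 hk
      simp [map_add, hk0]
    · rintro ⟨a, ha⟩
      have : x - F a ∈ K := by
        simp only [hK, LinearMap.mem_ker, ContinuousLinearMap.coe_coe, map_sub, show D (F a) = D x from ha, sub_self]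
      have hx : x = F a + (x - F a) := by abel
      rw [hx]
      exact Submodule.add_mem_sup (LinearMap.mem_range_self _ a) this
  constructor
  · intro h
    rw [hpre]
    exact h.preimage D.continuous
  · intro hScl
    obtain ⟨C, hC0, hC⟩ := aux_bounded_below D hD
    -- T = S ⊓ Kᗮ is a closed submodule
    set T : Submodule ℂ H := S ⊓ Kᗮ with hT
    have hTcl : IsClosed (T : Set H) := by
      have : (T : Set H) = (S : Set H) ∩ (Kᗮ : Set H) := rfl
      rw [this]
      exact hScl.inter (Submodule.isClosed_orthogonal K)
    haveI : CompleteSpace T := hTcl.completeSpace_coe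
    -- the restriction of D to T
    set g : T → H := fun t => D t with hg
    have hgu : UniformContinuous g := by
      apply D.uniformContinuous.comp
      exact uniformContinuous_subtype_val
    have hanti : AntilipschitzWith (Real.toNNReal C) g := by
      apply AntilipschitzWith.of_le_mul_dist
      intro t₁ t₂
      have hmem : ((t₁ : H) - t₂) ∈ Kᗮ := Kᗮ.sub_mem t₁.2.2 t₂.2.2
      have := hC _ hmem
      rw [map_sub] at this
      simp only [Subtype.dist_eq, dist_eq_norm]
      calc ‖(t₁ : H) - t₂‖ ≤ C * ‖D t₁ - D t₂‖ := this
        _ = (Real.toNNReal C : ℝ) * ‖g t₁ - g t₂‖ := by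
            rw [Real.coe_toNNReal _ hC0.le]
    have hrange_closed : IsClosed (Set.range g) := hanti.isClosed_range hgu
    -- range (D ∘ F) = D '' T = range g
    have himg : ((LinearMap.range ((D.comp F : H →L[ℂ] H) : H →ₗ[ℂ] H) : Submodule ℂ H) : Set H) = Set.range g := by
      ext y
      simp only [Set.mem_range, SetLike.mem_coe, LinearMap.mem_range,
        ContinuousLinearMap.coe_comp', Function.comp_apply]
      constructor
      · rintro ⟨a, rfl⟩
        -- decompose F a = k + t with k ∈ K, t ∈ Kᗮ
        obtain ⟨k, hk, t, ht, hdecomp⟩ := K.exists_add_mem_mem_orthogonal (F a)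
        have htS : t ∈ S := by
          have hFa : F a ∈ S := le_sup_left (α := Submodule ℂ H) (LinearMap.mem_range_self _ a)
          have hkS : k ∈ S := le_sup_right (α := Submodule ℂ H) hk
          have : t = F a - k := by rw [hdecomp]; abel
          rw [this]; exact S.sub_mem hFa hkS
        refine ⟨⟨t, htS, ht⟩, ?_⟩
        have hk0 : D k = 0 := LinearMap.mem_ker.1 hk
        show D t = D (F a)
        simp [hdecomp, map_add, hk0]
      · rintro ⟨⟨t, htS, htO⟩, rfl⟩
        obtain ⟨r, hr, k, hk, hdecomp⟩ := Submodule.mem_sup.1 htS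
        obtain ⟨a, rfl⟩ := LinearMap.mem_range.1 hr
        refine ⟨a, ?_⟩
        have hk0 : D k = 0 := LinearMap.mem_ker.1 hk
        show D (F a) = D t
        simp [← hdecomp, map_add, hk0]
    rw [himg]
    exact hrange_closed
end

section
/- Let H be a Hilbert space and F a bounded operator on H with closed range. Let (xₙ) be a sequence in H such that the sequence (P xₙ) is bounded, where P is the orthogonal projection onto ker F. If (xₙ) has no weakly convergent subsequence, then (F xₙ) has no norm-convergent subsequence. -/
open Filter Topology
lemma bdd_below_aux {H : Type*} [NormedAddCommGroup H] [InnerProductSpace ℂ H] [CompleteSpace H]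
    (F : H →L[ℂ] H) (hF : IsClosed ((LinearMap.range (F : H →ₗ[ℂ] H) : Submodule ℂ H) : Set H)) :
    ∃ c : ℝ, 0 ≤ c ∧ ∀ v ∈ (LinearMap.ker (F : H →ₗ[ℂ] H))ᗮ, ‖v‖ ≤ c * ‖F v‖ := by
  set K := (LinearMap.ker (F : H →ₗ[ℂ] H))ᗮ with hK
  haveI : CompleteSpace K := (LinearMap.ker (F : H →ₗ[ℂ] H)).isClosed_orthogonal.completeSpace_coe
  haveI : CompleteSpace (LinearMap.range (F : H →ₗ[ℂ] H) : Submodule ℂ H) := hF.completeSpace_coe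
  set T : K →L[ℂ] (LinearMap.range (F : H →ₗ[ℂ] H) : Submodule ℂ H) :=
    (F.comp K.subtypeL).codRestrict _ (fun v => ⟨(v : H), rfl⟩) with hT
  have hker : LinearMap.ker (T : K →ₗ[ℂ] (LinearMap.range (F : H →ₗ[ℂ] H) : Submodule ℂ H)) = ⊥ := by
    rw [LinearMap.ker_eq_bot']
    intro v hv
    have hFv : F (v : H) = 0 := congrArg Subtype.val hv
    have h0 : (inner ℂ (v : H) (v : H) : ℂ) = 0 := by
      have := (Submodule.mem_orthogonal _ _).1 v.2 (v : H) (LinearMap.mem_ker.2 hFv)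
      exact this
    exact Subtype.ext (inner_self_eq_zero.1 h0)
  have hrange : LinearMap.range (T : K →ₗ[ℂ] (LinearMap.range (F : H →ₗ[ℂ] H) : Submodule ℂ H)) = ⊤ := by
    rw [LinearMap.range_eq_top]
    rintro ⟨w, hw⟩
    obtain ⟨u, rfl⟩ := hw
    refine ⟨⟨u - (LinearMap.ker (F : H →ₗ[ℂ] H)).orthogonalProjection u,
      (LinearMap.ker (F : H →ₗ[ℂ] H)).sub_starProjection_mem_orthogonal u⟩, ?_⟩
    apply Subtype.ext
    have h0 : F ((LinearMap.ker (F : H →ₗ[ℂ] H)).starProjection u) = 0 :=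
      LinearMap.mem_ker.1 ((LinearMap.ker (F : H →ₗ[ℂ] H)).orthogonalProjection u).2
    change F (u - (LinearMap.ker (F : H →ₗ[ℂ] H)).starProjection u) = F u
    simp [hT, map_sub, h0]
  set e := ContinuousLinearEquiv.ofBijective T hker hrange with he
  set S : (LinearMap.range (F : H →ₗ[ℂ] H) : Submodule ℂ H) →L[ℂ] K := ↑e.symm with hS
  refine ⟨‖S‖, ContinuousLinearMap.opNorm_nonneg _, fun v hv => ?_⟩
  have h1 : ‖v‖ = ‖(⟨v, hv⟩ : K)‖ := rfl
  have h2 : e ⟨v, hv⟩ = T ⟨v, hv⟩ := rfl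
  calc ‖v‖ = ‖S (e ⟨v, hv⟩)‖ := by
        rw [show S (e ⟨v, hv⟩) = e.symm (e ⟨v, hv⟩) from rfl, e.symm_apply_apply]; exact h1
    _ ≤ ‖S‖ * ‖e ⟨v, hv⟩‖ := S.le_opNorm _
    _ = ‖S‖ * ‖F v‖ := by rw [h2]; rfl

lemma weak_seq_compact {H : Type*} [NormedAddCommGroup H] [InnerProductSpace ℂ H]
    [CompleteSpace H] (y : ℕ → H) (C : ℝ) (hC : ∀ n, ‖y n‖ ≤ C) :
    ∃ φ : ℕ → ℕ, StrictMono φ ∧ ∃ l : H, ∀ v : H,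
      Filter.Tendsto (fun n => (inner ℂ v (y (φ n)) : ℂ)) Filter.atTop (nhds (inner ℂ v l)) := by
  have hC0 : 0 ≤ C := le_trans (norm_nonneg (y 0)) (hC 0)
  set s : Set (ℕ → ℂ) := Set.univ.pi fun m => Metric.closedBall 0 (‖y m‖ * C) with hs
  have hcomp : IsCompact s := isCompact_univ_pi fun m => isCompact_closedBall _ _
  have hmem : ∀ n, (fun m => (inner ℂ (y m) (y n) : ℂ)) ∈ s := by
    intro n
    rw [Set.mem_univ_pi]
    intro m
    rw [Metric.mem_closedBall, dist_zero_right]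
    calc ‖(inner ℂ (y m) (y n) : ℂ)‖ ≤ ‖y m‖ * ‖y n‖ := norm_inner_le_norm _ _
      _ ≤ ‖y m‖ * C := mul_le_mul_of_nonneg_left (hC n) (norm_nonneg _)
  obtain ⟨f, -, φ, hφ, hconv⟩ := hcomp.isSeqCompact hmem
  rw [tendsto_pi_nhds] at hconv
  -- convergence on the span
  have hspan : ∀ v ∈ Submodule.span ℂ (Set.range y),
      ∃ c : ℂ, Tendsto (fun n => (inner ℂ v (y (φ n)) : ℂ)) atTop (𝓝 c) := by
    intro v hv
    induction hv using Submodule.span_induction with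
    | mem w hw =>
        obtain ⟨m, rfl⟩ := hw
        exact ⟨f m, hconv m⟩
    | zero => exact ⟨0, by simpa using tendsto_const_nhds⟩
    | add a b _ _ ha hb =>
        obtain ⟨ca, hca⟩ := ha
        obtain ⟨cb, hcb⟩ := hb
        exact ⟨ca + cb, by simpa [inner_add_left] using hca.add hcb⟩
    | smul a w _ hw =>
        obtain ⟨c, hc⟩ := hw
        exact ⟨(starRingEnd ℂ) a * c, by simpa [inner_smul_left, mul_comm] using hc.const_mul ((starRingEnd ℂ) a)⟩
  -- convergence on the closure of the span
  have hKconv : ∀ v ∈ closure ((Submodule.span ℂ (Set.range y) : Submodule ℂ H) : Set H),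
      ∃ c : ℂ, Tendsto (fun n => (inner ℂ v (y (φ n)) : ℂ)) atTop (𝓝 c) := by
    intro v hv
    have hcauchy : CauchySeq (fun n => (inner ℂ v (y (φ n)) : ℂ)) := by
      rw [Metric.cauchySeq_iff]
      intro ε hε
      obtain ⟨w, hw, hwd⟩ := Metric.mem_closure_iff.1 hv (ε / (3 * (C + 1)))
        (by positivity)
      obtain ⟨c, hc⟩ := hspan w hw
      obtain ⟨N, hN⟩ := Metric.cauchySeq_iff.1 hc.cauchySeq (ε / 3) (by positivity)
      refine ⟨N, fun m hm n hn => ?_⟩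
      have est : ∀ k, dist (inner ℂ v (y (φ k)) : ℂ) (inner ℂ w (y (φ k)) : ℂ) ≤ ε / 3 := by
        intro k
        rw [dist_eq_norm, ← inner_sub_left]
        calc ‖(inner ℂ (v - w) (y (φ k)) : ℂ)‖ ≤ ‖v - w‖ * ‖y (φ k)‖ := norm_inner_le_norm _ _
          _ ≤ (ε / (3 * (C + 1))) * (C + 1) := by
              apply mul_le_mul (le_of_lt (by rw [← dist_eq_norm]; exact hwd))
                (le_trans (hC _) (by linarith)) (norm_nonneg _) (by positivity)
          _ = ε / 3 := by field_simp
      have h4 := dist_triangle4 (inner ℂ v (y (φ m)) : ℂ) (inner ℂ w (y (φ m)) : ℂ)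
        (inner ℂ w (y (φ n)) : ℂ) (inner ℂ v (y (φ n)) : ℂ)
      have e1 := est m
      have e2 := hN m hm n hn
      have e3 := est n
      rw [dist_comm (inner ℂ w (y (φ n)) : ℂ)] at h4
      linarith
    exact cauchySeq_tendsto_of_complete hcauchy
  -- convergence everywhere via orthogonal projection onto the closed span
  set K := (Submodule.span ℂ (Set.range y)).topologicalClosure with hKdef
  haveI : CompleteSpace K := (Submodule.span ℂ (Set.range y)).isClosed_topologicalClosure.completeSpace_coe
  have hall : ∀ v : H, ∃ c : ℂ, Tendsto (fun n => (inner ℂ v (y (φ n)) : ℂ)) atTop (𝓝 c) := by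
    intro v
    have hmemK : ((K.orthogonalProjection v : H)) ∈
        closure ((Submodule.span ℂ (Set.range y) : Submodule ℂ H) : Set H) := by
      exact (K.orthogonalProjection v).2
    obtain ⟨c, hc⟩ := hKconv _ hmemK
    refine ⟨c, ?_⟩
    have hperp : ∀ n, (inner ℂ v (y (φ n)) : ℂ) = inner ℂ (K.orthogonalProjection v : H) (y (φ n)) := by
      intro n
      have h1 : y (φ n) ∈ K :=
        (Submodule.le_topologicalClosure _) (Submodule.subset_span (Set.mem_range_self _))
      have h2 : v - K.orthogonalProjection v ∈ Kᗮ := K.sub_starProjection_mem_orthogonal v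
      have h3 : (inner ℂ (v - (K.orthogonalProjection v : H)) (y (φ n)) : ℂ) = 0 :=
        Submodule.inner_left_of_mem_orthogonal h1 h2
      have h5 : (inner ℂ v (y (φ n)) : ℂ) - inner ℂ (K.orthogonalProjection v : H) (y (φ n)) =
          inner ℂ (v - (K.orthogonalProjection v : H)) (y (φ n)) := (inner_sub_left _ _ _).symm
      rw [h3] at h5
      exact sub_eq_zero.1 h5
    rw [show (fun n => (inner ℂ v (y (φ n)) : ℂ)) =
        fun n => (inner ℂ (K.orthogonalProjection v : H) (y (φ n)) : ℂ) from funext hperp]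
    exact hc
  choose c hc using hall
  have hc' : ∀ v, Tendsto (fun n => (inner ℂ (y (φ n)) v : ℂ)) atTop (𝓝 ((starRingEnd ℂ) (c v))) := by
    intro v
    have := ((Complex.continuous_conj.tendsto _).comp (hc v))
    simpa only [Function.comp_def, inner_conj_symm] using this
  set g : H → ℂ := fun v => (starRingEnd ℂ) (c v) with hg
  have gadd : ∀ u v, g (u + v) = g u + g v := fun u v =>
    tendsto_nhds_unique (hc' (u + v)) (by simpa [inner_add_right] using (hc' u).add (hc' v))
  have gsmul : ∀ (a : ℂ) (v : H), g (a • v) = a * g v := fun a v =>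
    tendsto_nhds_unique (hc' (a • v)) (by simpa [inner_smul_right] using (hc' v).const_mul a)
  have gbound : ∀ v, ‖g v‖ ≤ C * ‖v‖ := fun v =>
    le_of_tendsto (hc' v).norm (Filter.Eventually.of_forall fun n =>
      le_trans (norm_inner_le_norm _ _) (mul_le_mul_of_nonneg_right (hC _) (norm_nonneg _)))
  set gl : H →ₗ[ℂ] ℂ := { toFun := g, map_add' := gadd, map_smul' := gsmul } with hgl
  set gc : H →L[ℂ] ℂ := LinearMap.mkContinuous gl C gbound with hgc
  refine ⟨φ, hφ, (InnerProductSpace.toDual ℂ H).symm gc, fun v => ?_⟩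
  have hfin : (inner ℂ v ((InnerProductSpace.toDual ℂ H).symm gc) : ℂ) = c v := by
    rw [← inner_conj_symm, InnerProductSpace.toDual_symm_apply]
    show (starRingEnd ℂ) (gl v) = c v
    show (starRingEnd ℂ) (g v) = c v
    simp [hg]
  rw [hfin]
  exact hc v


/-- Lemma L02, Hilbert space case: let `F` have closed range, `P` the orthogonal
projection onto `ker F`, and `(xₙ)` a sequence with `(P xₙ)` bounded. If `(xₙ)`
has no weakly convergent subsequence, then `(F xₙ)` has no norm-convergent
subsequence. -/
theorem stmt_9 {H : Type*} [NormedAddCommGroup H] [InnerProductSpace ℂ H] [CompleteSpace H]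
    (F : H →L[ℂ] H)
    (hF : IsClosed ((LinearMap.range (F : H →ₗ[ℂ] H) : Submodule ℂ H) : Set H))
    (x : ℕ → H) (P : H →L[ℂ] H)
    (hP : ∀ v : H, P v ∈ LinearMap.ker (F : H →ₗ[ℂ] H) ∧ v - P v ∈ (LinearMap.ker (F : H →ₗ[ℂ] H))ᗮ)
    (hb : ∃ C : ℝ, ∀ n, ‖P (x n)‖ ≤ C)
    (hw : ¬ ∃ φ : ℕ → ℕ, StrictMono φ ∧ ∃ l : H, ∀ y : H,
        Filter.Tendsto (fun n => (inner ℂ y (x (φ n)) : ℂ)) Filter.atTop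
          (nhds (inner ℂ y l))) :
    ¬ ∃ φ : ℕ → ℕ, StrictMono φ ∧ ∃ l : H,
        Filter.Tendsto (fun n => F (x (φ n))) Filter.atTop (nhds l) := by
  rintro ⟨φ, hφ, l, hl⟩
  obtain ⟨C, hC⟩ := hb
  obtain ⟨c, hc0, hc⟩ := bdd_below_aux F hF
  set q : ℕ → H := fun n => x (φ n) - P (x (φ n)) with hq
  have hFq : ∀ n, F (q n) = F (x (φ n)) := by
    intro n
    have h0 : F (P (x (φ n))) = 0 := LinearMap.mem_ker.1 (hP (x (φ n))).1
    simp [hq, map_sub, h0]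
  have hqK : ∀ n, q n ∈ (LinearMap.ker (F : H →ₗ[ℂ] H))ᗮ := fun n => (hP (x (φ n))).2
  have hqcauchy : CauchySeq q := by
    have hFl : CauchySeq (fun n => F (x (φ n))) := hl.cauchySeq
    rw [Metric.cauchySeq_iff] at hFl ⊢
    intro ε hε
    obtain ⟨N, hN⟩ := hFl (ε / (c + 1)) (by positivity)
    refine ⟨N, fun m hm n hn => ?_⟩
    have h1 : q m - q n ∈ (LinearMap.ker (F : H →ₗ[ℂ] H))ᗮ := Submodule.sub_mem _ (hqK m) (hqK n)
    have h2 : dist (F (x (φ m))) (F (x (φ n))) < ε / (c + 1) := hN m hm n hn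
    rw [dist_eq_norm] at h2 ⊢
    calc ‖q m - q n‖ ≤ c * ‖F (q m - q n)‖ := hc _ h1
      _ = c * ‖F (x (φ m)) - F (x (φ n))‖ := by rw [map_sub, hFq, hFq]
      _ ≤ (c + 1) * ‖F (x (φ m)) - F (x (φ n))‖ := by
          apply mul_le_mul_of_nonneg_right (by linarith) (norm_nonneg _)
      _ < (c + 1) * (ε / (c + 1)) := by
          apply mul_lt_mul_of_pos_left h2 (by linarith)
      _ = ε := by field_simp
  obtain ⟨qlim, hqlim⟩ := cauchySeq_tendsto_of_complete hqcauchy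
  obtain ⟨ψ, hψ, l₂, hl₂⟩ := weak_seq_compact (fun n => P (x (φ n))) C (fun n => hC (φ n))
  apply hw
  refine ⟨φ ∘ ψ, hφ.comp hψ, qlim + l₂, fun v => ?_⟩
  have h1 : Tendsto (fun n => (inner ℂ v (q (ψ n)) : ℂ)) atTop (𝓝 (inner ℂ v qlim)) :=
    tendsto_const_nhds.inner (hqlim.comp (hψ.tendsto_atTop))
  have h3 := h1.add (hl₂ v)
  have heq : ∀ n, (inner ℂ v (q (ψ n)) : ℂ) + inner ℂ v (P (x (φ (ψ n)))) =
      inner ℂ v (x ((φ ∘ ψ) n)) := by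
    intro n
    rw [← inner_add_right]
    congr 1
    simp [hq]
  simp only [heq] at h3
  simpa [inner_add_right] using h3
end

section
/- Let H be a Hilbert space and F a bounded Fredholm operator on H with closed range. Then there exists ε > 0 such that for every bounded operator D with ‖D‖ < ε: ker(F + D) is isomorphic to a closed subspace of ker F, and (Im(F+D))^⊥ is isomorphic to a closed subspace of (Im F)^⊥. In particular dim ker(F+D) ≤ dim ker F and dim coker(F+D) ≤ dim coker F. -/
set_option maxHeartbeats 1600000
open Submodule

theorem sub_orthogonalProjection_mem_orthogonal {E : Type*} [NormedAddCommGroup E]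
    [InnerProductSpace ℂ E] {K : Submodule ℂ E} [K.HasOrthogonalProjection] (v : E) :
    v - (orthogonalProjection K v : E) ∈ Kᗮ :=
  sub_starProjection_mem_orthogonal v

lemma aux_lower_bound {H : Type*} [NormedAddCommGroup H] [InnerProductSpace ℂ H]
    [CompleteSpace H] (F : H →L[ℂ] H)
    (hF : IsClosed ((LinearMap.range (F : H →ₗ[ℂ] H) : Submodule ℂ H) : Set H))
    [HasOrthogonalProjection (LinearMap.ker (F : H →ₗ[ℂ] H))] :
    ∃ c > (0 : ℝ), ∀ x ∈ (LinearMap.ker (F : H →ₗ[ℂ] H))ᗮ, c * ‖x‖ ≤ ‖F x‖ := by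
  haveI : CompleteSpace (LinearMap.range (F : H →ₗ[ℂ] H) : Submodule ℂ H) := hF.completeSpace_coe
  haveI : CompleteSpace ((LinearMap.ker (F : H →ₗ[ℂ] H))ᗮ : Submodule ℂ H) :=
    (Submodule.isClosed_orthogonal _).completeSpace_coe
  have hFq : ∀ x : H, F (x - (orthogonalProjection (LinearMap.ker (F : H →ₗ[ℂ] H)) x : H)) = F x := by
    intro x
    have hmem := (orthogonalProjection (LinearMap.ker (F : H →ₗ[ℂ] H)) x).2
    have h0 : F ((orthogonalProjection (LinearMap.ker (F : H →ₗ[ℂ] H)) x : H)) = 0 := hmem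
    rw [map_sub, h0, sub_zero]
  let Φ : ((LinearMap.ker (F : H →ₗ[ℂ] H))ᗮ : Submodule ℂ H) →L[ℂ] (LinearMap.range (F : H →ₗ[ℂ] H) : Submodule ℂ H) :=
    (F.comp ((LinearMap.ker (F : H →ₗ[ℂ] H))ᗮ.subtypeL)).codRestrict _ (fun x => ⟨(x : H), rfl⟩)
  have hΦapp : ∀ x : ((LinearMap.ker (F : H →ₗ[ℂ] H))ᗮ : Submodule ℂ H), (Φ x : H) = F x := fun _ => rfl
  have hΦinj : LinearMap.ker (Φ : ((LinearMap.ker (F : H →ₗ[ℂ] H))ᗮ : Submodule ℂ H) →ₗ[ℂ] (LinearMap.range (F : H →ₗ[ℂ] H) : Submodule ℂ H)) = ⊥ := by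
    rw [LinearMap.ker_eq_bot']
    intro x hx
    have hFx : F (x : H) = 0 := by
      have := congrArg Subtype.val hx
      simpa [hΦapp] using this
    have hxK : (x : H) ∈ LinearMap.ker (F : H →ₗ[ℂ] H) := LinearMap.mem_ker.mpr hFx
    have h0 : (x : H) = 0 := by
      have := (Submodule.mem_orthogonal (LinearMap.ker (F : H →ₗ[ℂ] H)) (x : H)).mp x.2 (x : H) hxK
      simpa [inner_self_eq_zero] using this
    exact Subtype.ext h0
  have hΦsurj : LinearMap.range (Φ : ((LinearMap.ker (F : H →ₗ[ℂ] H))ᗮ : Submodule ℂ H) →ₗ[ℂ] (LinearMap.range (F : H →ₗ[ℂ] H) : Submodule ℂ H)) = ⊤ := by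
    rw [LinearMap.range_eq_top]
    rintro ⟨y, x, hx⟩
    refine ⟨⟨x - (orthogonalProjection (LinearMap.ker (F : H →ₗ[ℂ] H)) x : H),
      sub_orthogonalProjection_mem_orthogonal x⟩, ?_⟩
    apply Subtype.ext
    simp only [ContinuousLinearMap.coe_coe, hΦapp]
    rw [hFq x]; exact hx
  let e := ContinuousLinearEquiv.ofBijective Φ hΦinj hΦsurj
  set C : ℝ := ‖(e.symm : (LinearMap.range (F : H →ₗ[ℂ] H) : Submodule ℂ H) →L[ℂ]
      ((LinearMap.ker (F : H →ₗ[ℂ] H))ᗮ : Submodule ℂ H))‖ + 1 with hC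
  have hCpos : 0 < C := by positivity
  refine ⟨1 / C, by positivity, ?_⟩
  intro x hx
  have h1 : ‖(⟨x, hx⟩ : ((LinearMap.ker (F : H →ₗ[ℂ] H))ᗮ : Submodule ℂ H))‖ ≤ C * ‖e ⟨x, hx⟩‖ := by
    have h0 : (⟨x, hx⟩ : ((LinearMap.ker (F : H →ₗ[ℂ] H))ᗮ : Submodule ℂ H)) = e.symm (e ⟨x, hx⟩) :=
      (e.symm_apply_apply _).symm
    calc ‖(⟨x, hx⟩ : ((LinearMap.ker (F : H →ₗ[ℂ] H))ᗮ : Submodule ℂ H))‖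
        = ‖e.symm (e ⟨x, hx⟩)‖ := by rw [← h0]
      _ ≤ ‖(e.symm : (LinearMap.range (F : H →ₗ[ℂ] H) : Submodule ℂ H) →L[ℂ]
            ((LinearMap.ker (F : H →ₗ[ℂ] H))ᗮ : Submodule ℂ H))‖ * ‖e ⟨x, hx⟩‖ := by
          simpa using (e.symm.toContinuousLinearMap).le_opNorm (e ⟨x, hx⟩)
      _ ≤ C * ‖e ⟨x, hx⟩‖ := by nlinarith [norm_nonneg (e ⟨x, hx⟩)]
  have h2 : ‖e ⟨x, hx⟩‖ = ‖F x‖ := by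
    have h3 : ((e ⟨x, hx⟩ : (LinearMap.range (F : H →ₗ[ℂ] H) : Submodule ℂ H)) : H) = F x := rfl
    calc ‖e ⟨x, hx⟩‖ = ‖((e ⟨x, hx⟩ : (LinearMap.range (F : H →ₗ[ℂ] H) : Submodule ℂ H)) : H)‖ := rfl
      _ = ‖F x‖ := by rw [h3]
  have h3 : ‖(⟨x, hx⟩ : ((LinearMap.ker (F : H →ₗ[ℂ] H))ᗮ : Submodule ℂ H))‖ = ‖x‖ := rfl
  rw [h2, h3] at h1
  rw [div_mul_eq_mul_div, div_le_iff₀ hCpos]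
  nlinarith [norm_nonneg (F x)]

/-- Lemma L03, Hilbert space case: if `F` is Fredholm with closed range, then for
all sufficiently small perturbations `D`, `ker (F+D)` embeds as a closed subspace
into `ker F` and `(Im (F+D))ᗮ` embeds as a closed subspace into `(Im F)ᗮ`; in
particular the dimensions can only decrease. -/
theorem stmt_10 {H : Type*} [NormedAddCommGroup H] [InnerProductSpace ℂ H] [CompleteSpace H]
    (F : H →L[ℂ] H)
    (hF : IsClosed ((LinearMap.range (F : H →ₗ[ℂ] H) : Submodule ℂ H) : Set H))
    (hker : FiniteDimensional ℂ (LinearMap.ker (F : H →ₗ[ℂ] H)))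
    (hcoker : FiniteDimensional ℂ ((LinearMap.range (F : H →ₗ[ℂ] H))ᗮ : Submodule ℂ H)) :
    ∃ ε > (0 : ℝ), ∀ D : H →L[ℂ] H, ‖D‖ < ε →
      (∃ T : (LinearMap.ker ((F + D : H →L[ℂ] H) : H →ₗ[ℂ] H)) →L[ℂ] (LinearMap.ker (F : H →ₗ[ℂ] H)),
        Function.Injective T ∧ IsClosed (Set.range T)) ∧
      (∃ T : ((LinearMap.range ((F + D : H →L[ℂ] H) : H →ₗ[ℂ] H))ᗮ : Submodule ℂ H) →L[ℂ]
          ((LinearMap.range (F : H →ₗ[ℂ] H))ᗮ : Submodule ℂ H),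
        Function.Injective T ∧ IsClosed (Set.range T)) ∧
      Module.finrank ℂ (LinearMap.ker ((F + D : H →L[ℂ] H) : H →ₗ[ℂ] H)) ≤ Module.finrank ℂ (LinearMap.ker (F : H →ₗ[ℂ] H)) ∧
      Module.finrank ℂ ((LinearMap.range ((F + D : H →L[ℂ] H) : H →ₗ[ℂ] H))ᗮ : Submodule ℂ H) ≤
        Module.finrank ℂ ((LinearMap.range (F : H →ₗ[ℂ] H))ᗮ : Submodule ℂ H) := by
  classical
  haveI : CompleteSpace (LinearMap.range (F : H →ₗ[ℂ] H) : Submodule ℂ H) := hF.completeSpace_coe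
  haveI : CompleteSpace (LinearMap.ker (F : H →ₗ[ℂ] H) : Submodule ℂ H) :=
    (ContinuousLinearMap.isClosed_ker F).completeSpace_coe
  obtain ⟨c, hcpos, key⟩ := aux_lower_bound F hF
  have hFq : ∀ x : H, F (x - (orthogonalProjection (LinearMap.ker (F : H →ₗ[ℂ] H)) x : H)) = F x := by
    intro x
    have h0 : F ((orthogonalProjection (LinearMap.ker (F : H →ₗ[ℂ] H)) x : H)) = 0 :=
      (orthogonalProjection (LinearMap.ker (F : H →ₗ[ℂ] H)) x).2
    rw [map_sub, h0, sub_zero]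
  refine ⟨c, hcpos, fun D hD => ?_⟩
  -- kernel part
  let T : (LinearMap.ker ((F + D : H →L[ℂ] H) : H →ₗ[ℂ] H)) →L[ℂ] (LinearMap.ker (F : H →ₗ[ℂ] H)) :=
    (orthogonalProjection (LinearMap.ker (F : H →ₗ[ℂ] H))).comp ((LinearMap.ker ((F + D : H →L[ℂ] H) : H →ₗ[ℂ] H)).subtypeL)
  have hTzero : ∀ z : (LinearMap.ker ((F + D : H →L[ℂ] H) : H →ₗ[ℂ] H)), T z = 0 → z = 0 := by
    intro z hz
    have hproj : orthogonalProjection (LinearMap.ker (F : H →ₗ[ℂ] H)) (z : H) = 0 := hz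
    have hzK : (z : H) ∈ (LinearMap.ker (F : H →ₗ[ℂ] H))ᗮ := by
      have := sub_orthogonalProjection_mem_orthogonal (K := LinearMap.ker (F : H →ₗ[ℂ] H)) (z : H)
      rwa [hproj, Submodule.coe_zero, sub_zero] at this
    have hzker : F (z : H) + D (z : H) = 0 := z.2
    have hnorm : ‖F (z : H)‖ = ‖D (z : H)‖ := by
      have h4 : F (z : H) = -(D (z : H)) := eq_neg_of_add_eq_zero_left hzker
      rw [h4, norm_neg]
    have h1 : c * ‖(z : H)‖ ≤ ‖D‖ * ‖(z : H)‖ := by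
      calc c * ‖(z : H)‖ ≤ ‖F (z : H)‖ := key _ hzK
        _ = ‖D (z : H)‖ := hnorm
        _ ≤ ‖D‖ * ‖(z : H)‖ := D.le_opNorm _
    have hz0 : ‖(z : H)‖ = 0 := by nlinarith [norm_nonneg (z : H)]
    exact Subtype.ext (norm_eq_zero.mp hz0)
  have hTinj : Function.Injective T := by
    intro a b hab
    have h5 : T (a - b) = 0 := by rw [map_sub, hab, sub_self]
    have := hTzero _ h5
    rwa [sub_eq_zero] at this
  haveI hfinker : FiniteDimensional ℂ (LinearMap.ker ((F + D : H →L[ℂ] H) : H →ₗ[ℂ] H)) :=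
    FiniteDimensional.of_injective (T : (LinearMap.ker ((F + D : H →L[ℂ] H) : H →ₗ[ℂ] H)) →ₗ[ℂ] (LinearMap.ker (F : H →ₗ[ℂ] H))) hTinj
  have hTclosed : IsClosed (Set.range T) := by
    have h6 : Set.range ⇑T = ((LinearMap.range (T : (LinearMap.ker ((F + D : H →L[ℂ] H) : H →ₗ[ℂ] H)) →ₗ[ℂ]
        (LinearMap.ker (F : H →ₗ[ℂ] H)))) : Set (LinearMap.ker (F : H →ₗ[ℂ] H))) := by
      rw [LinearMap.coe_range]; rfl
    rw [h6]
    exact Submodule.closed_of_finiteDimensional _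
  -- cokernel part
  let T' : ((LinearMap.range ((F + D : H →L[ℂ] H) : H →ₗ[ℂ] H))ᗮ : Submodule ℂ H) →L[ℂ]
      ((LinearMap.range (F : H →ₗ[ℂ] H))ᗮ : Submodule ℂ H) :=
    (orthogonalProjection (LinearMap.range (F : H →ₗ[ℂ] H))ᗮ).comp (((LinearMap.range ((F + D : H →L[ℂ] H) : H →ₗ[ℂ] H))ᗮ).subtypeL)
  have hT'zero : ∀ z : ((LinearMap.range ((F + D : H →L[ℂ] H) : H →ₗ[ℂ] H))ᗮ : Submodule ℂ H), T' z = 0 → z = 0 := by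
    intro z hz
    have hproj : orthogonalProjection (LinearMap.range (F : H →ₗ[ℂ] H))ᗮ (z : H) = 0 := hz
    have hzmem : (z : H) ∈ ((LinearMap.range (F : H →ₗ[ℂ] H))ᗮ)ᗮ := by
      have := sub_orthogonalProjection_mem_orthogonal (K := (LinearMap.range (F : H →ₗ[ℂ] H))ᗮ) (z : H)
      rwa [hproj, Submodule.coe_zero, sub_zero] at this
    rw [Submodule.orthogonal_orthogonal] at hzmem
    obtain ⟨x, hx⟩ := hzmem
    set q : H := x - (orthogonalProjection (LinearMap.ker (F : H →ₗ[ℂ] H)) x : H) with hq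
    have hqK : q ∈ (LinearMap.ker (F : H →ₗ[ℂ] H))ᗮ := sub_orthogonalProjection_mem_orthogonal x
    have hFqz : F q = (z : H) := by rw [hq, hFq]; exact hx
    have hq'' : (F + D) q ∈ LinearMap.range ((F + D : H →L[ℂ] H) : H →ₗ[ℂ] H) := ⟨q, rfl⟩
    have hinner : inner ℂ ((F + D) q) ((z : H)) = (0 : ℂ) :=
      (Submodule.mem_orthogonal (LinearMap.range ((F + D : H →L[ℂ] H) : H →ₗ[ℂ] H)) ((z : H))).mp z.2 ((F + D) q) hq''
    have hsplit : (inner ℂ ((z : H)) ((z : H)) : ℂ) = -(inner ℂ (D q) ((z : H))) := by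
      have h7 : (inner ℂ (F q + D q) ((z : H)) : ℂ) = 0 := hinner
      rw [inner_add_left, hFqz] at h7
      linear_combination h7
    have hnormsq : ‖(z : H)‖ * ‖(z : H)‖ ≤ ‖D‖ * ‖q‖ * ‖(z : H)‖ := by
      have h1 : RCLike.re (inner ℂ ((z : H)) ((z : H)) : ℂ) = ‖(z : H)‖ * ‖(z : H)‖ :=
        inner_self_eq_norm_mul_norm _
      have h2 : RCLike.re (-(inner ℂ (D q) ((z : H))) : ℂ) ≤ ‖(inner ℂ (D q) ((z : H)) : ℂ)‖ := by
        calc RCLike.re (-(inner ℂ (D q) ((z : H))) : ℂ)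
            ≤ ‖(-(inner ℂ (D q) ((z : H))) : ℂ)‖ := RCLike.re_le_norm _
          _ = ‖(inner ℂ (D q) ((z : H)) : ℂ)‖ := norm_neg _
      have h3 : ‖(inner ℂ (D q) ((z : H)) : ℂ)‖ ≤ ‖D q‖ * ‖(z : H)‖ := norm_inner_le_norm _ _
      have h4 : ‖D q‖ ≤ ‖D‖ * ‖q‖ := D.le_opNorm _
      rw [← h1, hsplit]
      nlinarith [norm_nonneg (z : H)]
    have hqz : c * ‖q‖ ≤ ‖(z : H)‖ := by rw [← hFqz]; exact key q hqK
    have hz0 : ‖(z : H)‖ = 0 := by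
      have hmul : c * ‖q‖ * ‖(z : H)‖ ≤ ‖(z : H)‖ * ‖(z : H)‖ := by
        nlinarith [mul_le_mul_of_nonneg_right hqz (norm_nonneg (z : H))]
      have hQn : ‖q‖ * ‖(z : H)‖ = 0 := by
        by_contra hne
        have hpos : 0 < ‖q‖ * ‖(z : H)‖ :=
          lt_of_le_of_ne (mul_nonneg (norm_nonneg q) (norm_nonneg (z : H))) (Ne.symm hne)
        have hlt := mul_lt_mul_of_pos_right hD hpos
        nlinarith
      have hz2 : ‖D‖ * ‖q‖ * ‖(z : H)‖ = 0 := by rw [mul_assoc, hQn, mul_zero]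
      have hz3 : ‖(z : H)‖ * ‖(z : H)‖ ≤ 0 := by linarith
      nlinarith [norm_nonneg (z : H)]
    exact Subtype.ext (norm_eq_zero.mp hz0)
  have hT'inj : Function.Injective T' := by
    intro a b hab
    have h8 : T' (a - b) = 0 := by rw [map_sub, hab, sub_self]
    have := hT'zero _ h8
    rwa [sub_eq_zero] at this
  haveI hfincoker : FiniteDimensional ℂ ((LinearMap.range ((F + D : H →L[ℂ] H) : H →ₗ[ℂ] H))ᗮ : Submodule ℂ H) :=
    FiniteDimensional.of_injective (T' : ((LinearMap.range ((F + D : H →L[ℂ] H) : H →ₗ[ℂ] H))ᗮ : Submodule ℂ H) →ₗ[ℂ]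
      ((LinearMap.range (F : H →ₗ[ℂ] H))ᗮ : Submodule ℂ H)) hT'inj
  have hT'closed : IsClosed (Set.range T') := by
    have h9 : Set.range ⇑T' = ((LinearMap.range (T' : ((LinearMap.range ((F + D : H →L[ℂ] H) : H →ₗ[ℂ] H))ᗮ : Submodule ℂ H)
        →ₗ[ℂ] ((LinearMap.range (F : H →ₗ[ℂ] H))ᗮ : Submodule ℂ H))) :
        Set ((LinearMap.range (F : H →ₗ[ℂ] H))ᗮ : Submodule ℂ H)) := by
      rw [LinearMap.coe_range]; rfl
    rw [h9]
    exact Submodule.closed_of_finiteDimensional _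
  refine ⟨⟨T, hTinj, hTclosed⟩, ⟨T', hT'inj, hT'closed⟩, ?_, ?_⟩
  · exact LinearMap.finrank_le_finrank_of_injective (f := (T : (LinearMap.ker ((F + D : H →L[ℂ] H) : H →ₗ[ℂ] H)) →ₗ[ℂ]
      (LinearMap.ker (F : H →ₗ[ℂ] H)))) hTinj
  · exact LinearMap.finrank_le_finrank_of_injective
      (f := (T' : ((LinearMap.range ((F + D : H →L[ℂ] H) : H →ₗ[ℂ] H))ᗮ : Submodule ℂ H) →ₗ[ℂ]
        ((LinearMap.range (F : H →ₗ[ℂ] H))ᗮ : Submodule ℂ H))) hT'inj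
end

section
/- Let H be a Hilbert space and F a bounded operator on H. If F is not upper semi-Fredholm (i.e. either Im F is not closed or dim ker F = ∞), then there exists a compact operator K on H such that ker(F − K) is infinite-dimensional. Conversely, if F is upper semi-Fredholm, then ker(F − K) is finite-dimensional for every compact operator K. Hence F is upper semi-Fredholm if and only if ker(F − K) is finite-dimensional for all compact K. -/
open Submodule Metric Set Filter
open scoped InnerProductSpace Topology NNReal

section SchechterLebowAux

variable {H : Type*} [NormedAddCommGroup H] [InnerProductSpace ℂ H] [CompleteSpace H]

/-- closed + finite-dimensional sup is closed, in a Hilbert space. -/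
lemma aux_isClosed_sup (p q : Submodule ℂ H) [FiniteDimensional ℂ p]
    (hq : IsClosed (q : Set H)) : IsClosed ((p ⊔ q : Submodule ℂ H) : Set H) := by
  haveI : CompleteSpace q := hq.completeSpace_coe
  set π : H →L[ℂ] H := (qᗮ).subtypeL.comp (orthogonalProjection qᗮ) with hπ
  have hdecomp : ∀ x : H, x = (orthogonalProjection q x : H) + π x := fun x =>
    (starProjection_add_starProjection_orthogonal (K := q) x).symm
  set p' : Submodule ℂ H := p.map (π : H →ₗ[ℂ] H) with hp'
  haveI : FiniteDimensional ℂ p' := Module.Finite.map p _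
  have hp'le : p' ≤ qᗮ := by
    rintro _ ⟨a, _, rfl⟩
    exact (orthogonalProjection qᗮ a).2
  have hsup : p ⊔ q = p' ⊔ q := by
    apply le_antisymm
    · refine sup_le (fun a ha => ?_) le_sup_right
      have h1 : a = π a + (orthogonalProjection q a : H) := by rw [add_comm]; exact hdecomp a
      rw [h1]
      exact add_mem_sup (Submodule.mem_map_of_mem ha) (orthogonalProjection q a).2
    · refine sup_le (fun a ha => ?_) le_sup_right
      rcases ha with ⟨b, hb, rfl⟩
      have h1 : (π b : H) = b - (orthogonalProjection q b : H) := by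
        rw [eq_sub_iff_add_eq, add_comm, ← hdecomp b]
      show π b ∈ p ⊔ q
      rw [h1]
      exact Submodule.sub_mem _ (Submodule.mem_sup_left hb)
        (Submodule.mem_sup_right (orthogonalProjection q b).2)
  have hπq : ∀ b ∈ q, π b = 0 := by
    intro b hb
    have h0 : orthogonalProjection qᗮ b = 0 :=
      orthogonalProjection_eq_zero_iff.mpr (Submodule.le_orthogonal_orthogonal q hb)
    simp [hπ, h0]
  have hπid : ∀ a ∈ qᗮ, π a = a := by
    intro a ha
    have h0 : (orthogonalProjection qᗮ a : H) = a := by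
      exact starProjection_eq_self_iff.mpr ha
    simpa [hπ] using h0
  have hset : ((p' ⊔ q : Submodule ℂ H) : Set H) = π ⁻¹' (p' : Set H) := by
    ext x
    simp only [SetLike.mem_coe, Set.mem_preimage]
    constructor
    · intro hx
      rcases Submodule.mem_sup.mp hx with ⟨a, ha, b, hb, rfl⟩
      have h1 : π (a + b) = a := by rw [map_add, hπq b hb, hπid a (hp'le ha), add_zero]
      rw [h1]; exact ha
    · intro hx
      have h1 : x = (orthogonalProjection q x : H) + π x := hdecomp x
      rw [h1]
      exact Submodule.add_mem _ (Submodule.mem_sup_right (orthogonalProjection q x).2)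
        (Submodule.mem_sup_left hx)
  rw [hsup, hset]
  exact (Submodule.closed_of_finiteDimensional p').preimage π.continuous

/-- If the range of `F` is not closed, one can find an almost-kernel unit vector orthogonal to
any given finite-dimensional subspace. -/
lemma aux_step (F : H →L[ℂ] H)
    (hnc : ¬ IsClosed ((LinearMap.range (F : H →ₗ[ℂ] H) : Submodule ℂ H) : Set H))
    (M : Submodule ℂ H) [FiniteDimensional ℂ M] {ε : ℝ} (hε : 0 < ε) :
    ∃ y : H, ‖y‖ = 1 ∧ y ∈ Mᗮ ∧ ‖F y‖ ≤ ε := by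
  by_contra hcon
  push_neg at hcon
  have hbound : ∀ x ∈ Mᗮ, ε * ‖x‖ ≤ ‖F x‖ := by
    intro x hx
    rcases eq_or_ne x 0 with rfl | hx0
    · simp
    · have hpos : 0 < ‖x‖ := norm_pos_iff.mpr hx0
      have hcnorm : ‖((‖x‖⁻¹ : ℝ) : ℂ)‖ = ‖x‖⁻¹ := by
        rw [Complex.norm_real, Real.norm_eq_abs, abs_of_nonneg (inv_nonneg.mpr hpos.le)]
      have h1 : ‖(((‖x‖⁻¹ : ℝ) : ℂ) • x : H)‖ = 1 := by
        rw [norm_smul, hcnorm, inv_mul_cancel₀ hpos.ne']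
      have h2 := hcon _ h1 (Submodule.smul_mem _ _ hx)
      rw [map_smul, norm_smul, hcnorm] at h2
      have h3 : ‖x‖ * ε < ‖F x‖ := (lt_inv_mul_iff₀ hpos).mp h2
      nlinarith [h3]
  haveI : CompleteSpace Mᗮ := (Submodule.isClosed_orthogonal M).completeSpace_coe
  set G : Mᗮ →L[ℂ] H := F.comp Mᗮ.subtypeL with hG
  have hanti : AntilipschitzWith (ε.toNNReal)⁻¹ G := by
    refine AddMonoidHomClass.antilipschitz_of_bound _ (fun x => ?_)
    have h1 : ε * ‖x‖ ≤ ‖G x‖ := by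
      simpa [hG] using hbound (x : H) x.2
    rw [NNReal.coe_inv, Real.coe_toNNReal _ hε.le]
    exact (le_inv_mul_iff₀ hε).mpr h1
  have hclosedG : IsClosed (Set.range G) := hanti.isClosed_range G.uniformContinuous
  haveI : FiniteDimensional ℂ (M.map (F : H →ₗ[ℂ] H)) := Module.Finite.map M _
  have hrange : LinearMap.range (F : H →ₗ[ℂ] H) = (M.map (F : H →ₗ[ℂ] H)) ⊔ LinearMap.range (G : Mᗮ →ₗ[ℂ] H) := by
    haveI : CompleteSpace M := FiniteDimensional.complete ℂ M
    have htop : M ⊔ Mᗮ = ⊤ := Submodule.sup_orthogonal_of_hasOrthogonalProjection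
    apply le_antisymm
    · rintro _ ⟨x, rfl⟩
      have hx : x ∈ M ⊔ Mᗮ := htop ▸ Submodule.mem_top
      rcases Submodule.mem_sup.mp hx with ⟨a, ha, b, hb, rfl⟩
      have : F (a + b) = F a + G ⟨b, hb⟩ := by simp [hG]
      rw [ContinuousLinearMap.coe_coe, this]
      exact add_mem_sup (Submodule.mem_map_of_mem ha) (LinearMap.mem_range_self _ _)
    · refine sup_le ?_ ?_
      · rintro _ ⟨a, _, rfl⟩; exact LinearMap.mem_range_self _ _
      · rintro _ ⟨b, rfl⟩; exact LinearMap.mem_range_self _ _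
  apply hnc
  rw [hrange]
  have hcl : IsClosed ((LinearMap.range (G : Mᗮ →ₗ[ℂ] H) : Submodule ℂ H) : Set H) := by
    simpa [LinearMap.coe_range] using hclosedG
  exact aux_isClosed_sup _ _ hcl

/-- orthonormal sequence almost annihilated by `F`. -/
lemma aux_seq (F : H →L[ℂ] H)
    (hnc : ¬ IsClosed ((LinearMap.range (F : H →ₗ[ℂ] H) : Submodule ℂ H) : Set H)) :
    ∃ x : ℕ → H, Orthonormal ℂ x ∧ ∀ n, ‖F (x n)‖ ≤ (2 : ℝ)⁻¹ ^ n := by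
  have key : ∀ s : Finset (H × ℕ),
      (∀ p ∈ s, ‖p.1‖ = 1 ∧ ‖F p.1‖ ≤ (2 : ℝ)⁻¹ ^ p.2) →
      ∃ q : H × ℕ, (‖q.1‖ = 1 ∧ ‖F q.1‖ ≤ (2 : ℝ)⁻¹ ^ q.2) ∧
        ∀ p ∈ s, ⟪p.1, q.1⟫_ℂ = 0 ∧ p.2 < q.2 := by
    classical
    intro s hs
    set M : Submodule ℂ H := Submodule.span ℂ ((s.image Prod.fst : Finset H) : Set H) with hM
    haveI : FiniteDimensional ℂ M :=
      FiniteDimensional.span_of_finite ℂ (Finset.finite_toSet _)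
    set k : ℕ := s.sup Prod.snd + 1 with hk
    obtain ⟨y, hy1, hy2, hy3⟩ := aux_step F hnc M (ε := (2 : ℝ)⁻¹ ^ k)
      (pow_pos (by norm_num) k)
    refine ⟨(y, k), ⟨hy1, hy3⟩, fun p hp => ⟨?_, ?_⟩⟩
    · exact (Submodule.mem_orthogonal M y).mp hy2 p.1
        (Submodule.subset_span (by simpa using Finset.mem_image_of_mem Prod.fst hp))
    · exact Nat.lt_succ_of_le (Finset.le_sup hp)
  obtain ⟨f, hP, hr⟩ := exists_seq_of_forall_finset_exists
      (fun p : H × ℕ => ‖p.1‖ = 1 ∧ ‖F p.1‖ ≤ (2 : ℝ)⁻¹ ^ p.2)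
      (fun p q => ⟪p.1, q.1⟫_ℂ = 0 ∧ p.2 < q.2) key
  refine ⟨fun n => (f n).1, ?_, ?_⟩
  · rw [orthonormal_iff_ite]
    intro i j
    rcases lt_trichotomy i j with h | rfl | h
    · rw [if_neg h.ne]; exact (hr i j h).1
    · rw [if_pos rfl]
      have h1 := (hP i).1
      rw [inner_self_eq_norm_sq_to_K, h1]
      norm_num
    · rw [if_neg h.ne']
      rw [← inner_eq_zero_symm]
      exact (hr j i h).1
  · intro n
    have hmono : StrictMono (fun n => (f n).2) :=
      strictMono_nat_of_lt_succ (fun m => (hr m (m + 1) (Nat.lt_succ_self m)).2)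
    have h1 : n ≤ (f n).2 := hmono.le_apply
    refine (hP n).2.trans ?_
    exact pow_le_pow_of_le_one (by norm_num) (by norm_num) h1

lemma aux_compact (F : H →L[ℂ] H) (x : ℕ → H) (hon : Orthonormal ℂ x)
    (hsmall : ∀ n, ‖F (x n)‖ ≤ (2 : ℝ)⁻¹ ^ n) :
    ∃ K : H →L[ℂ] H, IsCompactOperator K ∧ ∀ n, x n ∈ LinearMap.ker ((F - K : H →L[ℂ] H) : H →ₗ[ℂ] H) := by
  set T : ℕ → H →L[ℂ] H := fun n => (innerSL ℂ (x n)).smulRight (F (x n)) with hT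
  have hnorm : ∀ n, ‖T n‖ ≤ (2 : ℝ)⁻¹ ^ n := by
    intro n
    rw [hT]
    calc ‖(innerSL ℂ (x n)).smulRight (F (x n))‖ = ‖innerSL ℂ (x n)‖ * ‖F (x n)‖ :=
          ContinuousLinearMap.norm_smulRight_apply _ _
      _ = ‖x n‖ * ‖F (x n)‖ := by rw [innerSL_apply_norm]
      _ = ‖F (x n)‖ := by rw [hon.1 n, one_mul]
      _ ≤ _ := hsmall n
  have hsum : Summable T := by
    refine Summable.of_norm_bounded ?_ hnorm
    exact summable_geometric_of_lt_one (by norm_num) (by norm_num)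
  obtain ⟨K, hK⟩ := hsum
  have hTcompact : ∀ n, IsCompactOperator (T n) := by
    intro n
    have h1 : IsCompactOperator (ContinuousLinearMap.toSpanSingleton ℂ (F (x n))) := by
      refine ⟨(ContinuousLinearMap.toSpanSingleton ℂ (F (x n))) '' closedBall 0 1,
        (isCompact_closedBall _ _).image (ContinuousLinearMap.toSpanSingleton ℂ (F (x n))).continuous,
        mem_of_superset (closedBall_mem_nhds 0 one_pos) (subset_preimage_image _ _)⟩
    have h2 := h1.comp_clm (innerSL ℂ (x n))
    have h3 : ⇑(ContinuousLinearMap.toSpanSingleton ℂ (F (x n))) ∘ ⇑(innerSL ℂ (x n)) = ⇑(T n) := by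
      funext z
      simp [hT, ContinuousLinearMap.toSpanSingleton_apply]
    rwa [h3] at h2
  have hKcompact : IsCompactOperator K := by
    refine isCompactOperator_of_tendsto hK (Eventually.of_forall (fun s => ?_))
    classical
    induction s using Finset.induction_on with
    | empty => simpa using (isCompactOperator_zero : IsCompactOperator (0 : H → H))
    | insert _ _ hni ih =>
      rename_i a t
      rw [Finset.sum_insert hni]
      have := (hTcompact a).add ih
      rwa [← ContinuousLinearMap.coe_add'] at this
  refine ⟨K, hKcompact, fun j => ?_⟩
  have happ : HasSum (fun n => T n (x j)) (K (x j)) := by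
    exact hK.mapL (ContinuousLinearMap.apply ℂ H (x j))
  have hfun : (fun n => T n (x j)) = fun n => if n = j then F (x j) else 0 := by
    funext n
    have := orthonormal_iff_ite.mp hon n j
    by_cases h : n = j
    · subst h
      simp only [hT, ContinuousLinearMap.smulRight_apply, innerSL_apply_apply]
      rw [orthonormal_iff_ite.mp hon n n] at *
      simp
    · simp only [hT, ContinuousLinearMap.smulRight_apply, innerSL_apply_apply, if_neg h]
      rw [orthonormal_iff_ite.mp hon n j, if_neg h, zero_smul]
  have hKx : K (x j) = F (x j) := by
    rw [hfun] at happ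
    exact happ.unique (hasSum_ite_eq j (F (x j)))
  simp only [LinearMap.mem_ker, ContinuousLinearMap.coe_sub', Pi.sub_apply,
    ContinuousLinearMap.coe_coe]
  rw [hKx]
  simp

lemma aux_forward (F K : H →L[ℂ] H)
    (hclosed : IsClosed ((LinearMap.range (F : H →ₗ[ℂ] H) : Submodule ℂ H) : Set H))
    (hker : FiniteDimensional ℂ (LinearMap.ker (F : H →ₗ[ℂ] H))) (hK : IsCompactOperator K) :
    FiniteDimensional ℂ (LinearMap.ker ((F - K : H →L[ℂ] H) : H →ₗ[ℂ] H)) := by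
  haveI : CompleteSpace (LinearMap.ker (F : H →ₗ[ℂ] H)) := (ContinuousLinearMap.isClosed_ker F).completeSpace_coe
  haveI : CompleteSpace ((LinearMap.ker (F : H →ₗ[ℂ] H))ᗮ : Submodule ℂ H) :=
    (Submodule.isClosed_orthogonal _).completeSpace_coe
  haveI : CompleteSpace (LinearMap.range (F : H →ₗ[ℂ] H) : Submodule ℂ H) := hclosed.completeSpace_coe
  -- the bounded-below constant on (ker F)ᗮ
  set N : Submodule ℂ H := (LinearMap.ker (F : H →ₗ[ℂ] H))ᗮ with hN
  have hmem : ∀ z : N, F ((N.subtypeL) z) ∈ LinearMap.range (F : H →ₗ[ℂ] H) := fun z => ⟨_, rfl⟩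
  set G : N →L[ℂ] (LinearMap.range (F : H →ₗ[ℂ] H) : Submodule ℂ H) :=
    (F.comp N.subtypeL).codRestrict _ hmem with hG
  have hGinj : LinearMap.ker (G : N →ₗ[ℂ] LinearMap.range (F : H →ₗ[ℂ] H)) = ⊥ := by
    rw [LinearMap.ker_eq_bot]
    intro a b hab
    have h1 : F (a : H) = F (b : H) := congrArg Subtype.val hab
    have h2 : ((a : H) - b) ∈ LinearMap.ker (F : H →ₗ[ℂ] H) := by
      simp [LinearMap.mem_ker, map_sub, h1]
    have h3 : ((a : H) - b) ∈ N := Submodule.sub_mem _ a.2 b.2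
    have h4 : ((a : H) - b) = 0 :=
      Submodule.disjoint_def.mp (Submodule.orthogonal_disjoint (LinearMap.ker (F : H →ₗ[ℂ] H))) _ h2 h3
    exact Subtype.ext (sub_eq_zero.mp h4)
  have hGsurj : LinearMap.range (G : N →ₗ[ℂ] LinearMap.range (F : H →ₗ[ℂ] H)) = ⊤ := by
    rw [LinearMap.range_eq_top]
    rintro ⟨y, hy⟩
    obtain ⟨w, rfl⟩ := hy
    have hdec : (orthogonalProjection (LinearMap.ker (F : H →ₗ[ℂ] H)) w : H) + (orthogonalProjection N w : H)
        = w := starProjection_add_starProjection_orthogonal (K := _) w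
    refine ⟨orthogonalProjection N w, Subtype.ext ?_⟩
    show F ((orthogonalProjection N w : H)) = F w
    conv_rhs => rw [← hdec]
    rw [map_add]
    have h0 : F ((orthogonalProjection (LinearMap.ker (F : H →ₗ[ℂ] H)) w : H)) = 0 :=
      (orthogonalProjection (LinearMap.ker (F : H →ₗ[ℂ] H)) w).2
    rw [h0, zero_add]
  set e := ContinuousLinearEquiv.ofBijective G hGinj hGsurj with he
  obtain ⟨c, hc⟩ : ∃ c : ℝ≥0, AntilipschitzWith c e := ⟨_, e.antilipschitz⟩
  have hbelow : ∀ z : H, z ∈ N → ‖z‖ ≤ c * ‖F z‖ := by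
    intro z hz
    have h1 := hc.le_mul_dist (⟨z, hz⟩ : N) 0
    rw [dist_eq_norm, dist_eq_norm, map_zero, sub_zero, sub_zero] at h1
    exact h1
  -- W := ker (F - K) ⊓ N is finite dimensional
  set W : Submodule ℂ H := LinearMap.ker ((F - K : H →L[ℂ] H) : H →ₗ[ℂ] H) ⊓ N with hW
  have hWclosed : IsClosed (W : Set H) :=
    (ContinuousLinearMap.isClosed_ker (F - K)).inter (Submodule.isClosed_orthogonal _)
  haveI : CompleteSpace W := hWclosed.completeSpace_coe
  have hFK : ∀ w : W, F (w : H) = K (w : H) := by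
    intro w
    have : (w : H) ∈ LinearMap.ker ((F - K : H →L[ℂ] H) : H →ₗ[ℂ] H) := w.2.1
    simp only [LinearMap.mem_ker, ContinuousLinearMap.coe_sub', Pi.sub_apply,
      ContinuousLinearMap.coe_coe] at this
    exact sub_eq_zero.mp this
  set T : W →L[ℂ] H := K.comp W.subtypeL with hTd
  have hTcompact : IsCompactOperator T := hK.comp_clm W.subtypeL
  have hTanti : AntilipschitzWith c T := by
    refine AddMonoidHomClass.antilipschitz_of_bound _ (fun w => ?_)
    have h1 : ‖(w : H)‖ ≤ c * ‖F (w : H)‖ := hbelow _ w.2.2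
    rw [hFK w] at h1
    simpa [hTd] using h1
  haveI hWfin : FiniteDimensional ℂ W := by
    obtain ⟨C, hCc, hCm⟩ := hTcompact
    obtain ⟨r, hr, hball⟩ := Metric.mem_nhds_iff.mp hCm
    have h2 : TotallyBounded (T ⁻¹' C) :=
      totallyBounded_preimage (hTanti.isUniformInducing T.uniformContinuous)
        hCc.totallyBounded
    have h3 : TotallyBounded (closedBall (0 : W) (r / 2)) :=
      h2.subset ((closedBall_subset_ball (by linarith)).trans hball)
    have h4 : IsCompact (closedBall (0 : W) (r / 2)) :=
      TotallyBounded.isCompact_of_isClosed h3 isClosed_closedBall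
    exact FiniteDimensional.of_isCompact_closedBall₀ (𝕜 := ℂ) (by linarith) h4
  -- conclude via the orthogonal projection to ker F
  set V : Submodule ℂ H := LinearMap.ker ((F - K : H →L[ℂ] H) : H →ₗ[ℂ] H) with hV
  set ψ : V →ₗ[ℂ] (LinearMap.ker (F : H →ₗ[ℂ] H)) :=
    (orthogonalProjection (LinearMap.ker (F : H →ₗ[ℂ] H))).toLinearMap.comp V.subtype with hψ
  haveI : FiniteDimensional ℂ (LinearMap.ker ψ) := by
    have hmemW : ∀ a : LinearMap.ker ψ, ((a : V) : H) ∈ W := by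
      rintro ⟨⟨v, hv⟩, hkψ⟩
      refine ⟨hv, ?_⟩
      have h5 : orthogonalProjection (LinearMap.ker (F : H →ₗ[ℂ] H)) v = 0 := by
        simpa [hψ] using hkψ
      exact orthogonalProjection_eq_zero_iff.mp h5
    set ι : (LinearMap.ker ψ) →ₗ[ℂ] W :=
      LinearMap.codRestrict W (V.subtype.comp (LinearMap.ker ψ).subtype) hmemW with hι
    refine FiniteDimensional.of_injective ι ?_
    intro a b hab
    have h6 := congrArg (Subtype.val : W → H) hab
    exact Subtype.ext (Subtype.ext h6)
  have : Module.Finite ℂ V := by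
    rw [Module.finite_def]
    refine Submodule.fg_of_fg_map_of_fg_inf_ker ψ ?_ ?_
    · haveI : FiniteDimensional ℂ (Submodule.map ψ ⊤) :=
        FiniteDimensional.finiteDimensional_submodule _
      exact (Submodule.fg_iff_finiteDimensional _).mpr this
    · rw [top_inf_eq]
      exact (Submodule.fg_iff_finiteDimensional _).mpr inferInstance
  exact this

end SchechterLebowAux

/-- Schechter–Lebow characterization (T01), Hilbert space case: `F` is upper
semi-Fredholm (closed range and finite-dimensional kernel) iff `ker (F - K)` is
finite-dimensional for every compact operator `K`. -/
theorem stmt_12 {H : Type*} [NormedAddCommGroup H] [InnerProductSpace ℂ H] [CompleteSpace H]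
    (F : H →L[ℂ] H) :
    (IsClosed ((LinearMap.range (F : H →ₗ[ℂ] H) : Submodule ℂ H) : Set H) ∧
        FiniteDimensional ℂ (LinearMap.ker (F : H →ₗ[ℂ] H))) ↔
      ∀ K : H →L[ℂ] H, IsCompactOperator K →
        FiniteDimensional ℂ (LinearMap.ker ((F - K : H →L[ℂ] H) : H →ₗ[ℂ] H)) := by
  constructor
  · rintro ⟨hclosed, hker⟩ K hK
    exact aux_forward F K hclosed hker hK
  · intro h
    have hker : FiniteDimensional ℂ (LinearMap.ker (F : H →ₗ[ℂ] H)) := by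
      have hzero : IsCompactOperator ((0 : H →L[ℂ] H) : H → H) := by
        have : ((0 : H →L[ℂ] H) : H → H) = (0 : H → H) := rfl
        rw [this]
        exact isCompactOperator_zero
      have h0 := h 0 hzero
      rwa [sub_zero] at h0
    refine ⟨?_, hker⟩
    by_contra hnc
    obtain ⟨x, hon, hsmall⟩ := aux_seq F hnc
    obtain ⟨K, hKc, hmem⟩ := aux_compact F x hon hsmall
    haveI := h K hKc
    have hli : LinearIndependent ℂ
        (fun n => (⟨x n, hmem n⟩ : LinearMap.ker ((F - K : H →L[ℂ] H) : H →ₗ[ℂ] H))) := by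
      apply LinearIndependent.of_comp (LinearMap.ker ((F - K : H →L[ℂ] H) : H →ₗ[ℂ] H)).subtype
      exact hon.linearIndependent
    exact Module.Finite.not_linearIndependent_of_infinite _ hli
end

section
/- Let H be a separable Hilbert space and F a bounded operator on H. Then F is lower semi-Fredholm (Im F closed with finite-dimensional orthogonal complement) if and only if (Im(F − K))^⊥ is finite-dimensional for every compact operator K on H. -/
set_option linter.unusedSectionVars false
set_option maxHeartbeats 1000000

open ContinuousLinearMap Submodule Metric

section C03Aux

variable {H : Type*} [NormedAddCommGroup H] [InnerProductSpace ℂ H] [CompleteSpace H]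

local notation "⟪" x ", " y "⟫" => @inner ℂ _ _ x y

theorem my_ker_adjoint (T : H →L[ℂ] H) : LinearMap.ker ((adjoint T : H →L[ℂ] H) : H →ₗ[ℂ] H) = (LinearMap.range (T : H →ₗ[ℂ] H))ᗮ := by
  ext x
  simp only [LinearMap.mem_ker, Submodule.mem_orthogonal, ContinuousLinearMap.coe_coe]
  constructor
  · rintro h _ ⟨y, rfl⟩
    rw [ContinuousLinearMap.coe_coe, ← ContinuousLinearMap.adjoint_inner_right, h, inner_zero_right]
  · intro h
    have : ∀ y : H, ⟪y, adjoint T x⟫ = 0 := fun y => by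
      rw [ContinuousLinearMap.adjoint_inner_right]; exact h _ ⟨y, rfl⟩
    have := this (adjoint T x)
    rwa [inner_self_eq_zero] at this

noncomputable def rankOne (u v : H) : H →L[ℂ] H := (innerSL ℂ u).smulRight v

theorem rankOne_apply (u v x : H) : rankOne u v x = ⟪u, x⟫ • v := rfl

theorem norm_rankOne_le (u v : H) : ‖rankOne u v‖ ≤ ‖u‖ * ‖v‖ := by
  rw [rankOne, ContinuousLinearMap.norm_smulRight_apply, innerSL_apply_norm]

theorem adjoint_rankOne (u v : H) : adjoint (rankOne u v) = rankOne v u := by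
  symm
  refine (ContinuousLinearMap.eq_adjoint_iff _ _).2 fun x y => ?_
  simp [rankOne_apply, inner_smul_left, inner_smul_right]
  ring

theorem isCompactOperator_rankOne (u v : H) : IsCompactOperator (rankOne u v) := by
  have h1 : IsCompactOperator (innerSL ℂ u) := by
    refine ⟨closedBall 0 ‖u‖, isCompact_closedBall _ _, ?_⟩
    filter_upwards [Metric.ball_mem_nhds (0 : H) one_pos] with x hx
    rw [mem_ball_zero_iff] at hx
    simp only [Set.mem_preimage, mem_closedBall, dist_zero_right]
    calc ‖(innerSL ℂ u) x‖ ≤ ‖u‖ * ‖x‖ := norm_inner_le_norm u x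
    _ ≤ ‖u‖ * 1 := by nlinarith [norm_nonneg u]
    _ = ‖u‖ := mul_one _
  exact h1.continuous_comp (continuous_id.smul continuous_const)

theorem isCompactOperator_finsum (g : ℕ → H →L[ℂ] H) (hg : ∀ n, IsCompactOperator (g n))
    (s : Finset ℕ) : IsCompactOperator ⇑(∑ n ∈ s, g n) := by
  classical
  induction s using Finset.induction with
  | empty => simpa using isCompactOperator_zero
  | insert _ _ h ih =>
      rw [Finset.sum_insert h, ContinuousLinearMap.coe_add']
      exact (hg _).add ih

theorem isCompactOperator_tsum (g : ℕ → H →L[ℂ] H) (hs : Summable g)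
    (hg : ∀ n, IsCompactOperator (g n)) : IsCompactOperator ⇑(∑' n, g n) := by
  refine isCompactOperator_of_tendsto hs.hasSum.tendsto_sum_nat ?_
  filter_upwards with N
  exact isCompactOperator_finsum g hg _

theorem exists_unit_orthogonal (W U : Submodule ℂ H) (hW : ¬FiniteDimensional ℂ W)
    [hU : FiniteDimensional ℂ U] : ∃ x : H, x ∈ W ∧ x ∈ Uᗮ ∧ ‖x‖ = 1 := by
  haveI : CompleteSpace U := FiniteDimensional.complete ℂ U
  set f : W →ₗ[ℂ] U :=
    ((orthogonalProjection U : H →L[ℂ] U) : H →ₗ[ℂ] U).comp W.subtype with hf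
  have hni : ¬Function.Injective f := fun hinj => hW (FiniteDimensional.of_injective f hinj)
  rw [← LinearMap.ker_eq_bot] at hni
  obtain ⟨z, hz, hz0⟩ := Submodule.exists_mem_ne_zero_of_ne_bot hni
  have hzU : (z : H) ∈ Uᗮ := by
    rw [LinearMap.mem_ker] at hz
    exact Submodule.orthogonalProjectionOnto_eq_zero_iff.1 hz
  have hzH : (z : H) ≠ 0 := fun h => hz0 (Subtype.coe_injective h)
  refine ⟨‖(z : H)‖⁻¹ • (z : H), W.smul_mem _ z.2, Uᗮ.smul_mem _ hzU, ?_⟩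
  rw [norm_smul, norm_inv, norm_norm, inv_mul_cancel₀ (norm_ne_zero_iff.2 hzH)]

theorem no_separated_seq {C : Set H} (hC : IsCompact C) (s : ℕ → H) (hs : ∀ n, s n ∈ C)
    {δ : ℝ} (hsep : ∀ m n, m ≠ n → δ ≤ ‖s m - s n‖) (hδ : 0 < δ) : False := by
  obtain ⟨a, -, φ, hφ, hconv⟩ := hC.tendsto_subseq hs
  obtain ⟨N, hN⟩ := (Metric.tendsto_atTop.1 hconv) (δ/2) (by positivity)
  have h1 := hN N le_rfl
  have h2 := hN (N+1) (Nat.le_succ N)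
  simp only [Function.comp_apply] at h1 h2
  have hne : φ N ≠ φ (N+1) := fun h => by simpa using hφ.injective h
  have := hsep _ _ hne
  rw [← dist_eq_norm] at this
  have := dist_triangle (s (φ N)) a (s (φ (N+1)))
  rw [dist_comm a (s (φ (N+1)))] at this
  linarith [dist_comm (s (φ (N+1))) a]

variable (W V : Submodule ℂ H)

noncomputable def pickON (hW : ¬FiniteDimensional ℂ W) [FiniteDimensional ℂ V]
    (l : List H) : H :=
  haveI := FiniteDimensional.span_of_finite ℂ l.finite_toSet
  haveI : FiniteDimensional ℂ ↥(V ⊔ span ℂ {x | x ∈ l}) :=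
    Submodule.finiteDimensional_sup _ _
  Classical.choose (exists_unit_orthogonal W (V ⊔ span ℂ {x | x ∈ l}) hW)

theorem pickON_spec (hW : ¬FiniteDimensional ℂ W) [FiniteDimensional ℂ V] (l : List H) :
    pickON W V hW l ∈ W ∧ pickON W V hW l ∈ (V ⊔ span ℂ {x | x ∈ l})ᗮ ∧
      ‖pickON W V hW l‖ = 1 :=
  haveI := FiniteDimensional.span_of_finite ℂ l.finite_toSet
  haveI : FiniteDimensional ℂ ↥(V ⊔ span ℂ {x | x ∈ l}) :=
    Submodule.finiteDimensional_sup _ _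
  Classical.choose_spec (exists_unit_orthogonal W (V ⊔ span ℂ {x | x ∈ l}) hW)

noncomputable def onList (hW : ¬FiniteDimensional ℂ W) [FiniteDimensional ℂ V] : ℕ → List H
  | 0 => []
  | n+1 => pickON W V hW (onList hW n) :: onList hW n

noncomputable def onSeq (hW : ¬FiniteDimensional ℂ W) [FiniteDimensional ℂ V] (n : ℕ) : H :=
  pickON W V hW (onList W V hW n)

theorem mem_onList (hW : ¬FiniteDimensional ℂ W) [FiniteDimensional ℂ V] (n : ℕ) (x : H) :
    x ∈ onList W V hW n ↔ ∃ m, m < n ∧ x = onSeq W V hW m := by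
  induction n with
  | zero => simp [onList]
  | succ n ih =>
      simp only [onList, List.mem_cons, ih]
      constructor
      · rintro (rfl | ⟨m, hm, rfl⟩)
        · exact ⟨n, Nat.lt_succ_self n, rfl⟩
        · exact ⟨m, hm.trans (Nat.lt_succ_self n), rfl⟩
      · rintro ⟨m, hm, rfl⟩
        rcases Nat.lt_succ_iff_lt_or_eq.1 hm with h | rfl
        · exact Or.inr ⟨m, h, rfl⟩
        · exact Or.inl rfl

theorem exists_orthonormal_seq (hW : ¬FiniteDimensional ℂ W) [FiniteDimensional ℂ V] :
    ∃ e : ℕ → H, (∀ n, e n ∈ W) ∧ (∀ n, e n ∈ Vᗮ) ∧ Orthonormal ℂ e := by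
  set e := onSeq W V hW with he
  have spec := fun n => pickON_spec W V hW (onList W V hW n)
  have hmemW : ∀ n, e n ∈ W := fun n => (spec n).1
  have hnorm : ∀ n, ‖e n‖ = 1 := fun n => (spec n).2.2
  have horth : ∀ n, e n ∈ (V ⊔ span ℂ {x | x ∈ onList W V hW n})ᗮ :=
    fun n => (spec n).2.1
  have hV : ∀ n, e n ∈ Vᗮ := fun n =>
    (Submodule.orthogonal_le le_sup_left) (horth n)
  have hlt : ∀ m n, m < n → ⟪e m, e n⟫ = 0 := by
    intro m n hmn
    have hmem : e m ∈ V ⊔ span ℂ {x | x ∈ onList W V hW n} := by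
      apply Submodule.mem_sup_right
      apply Submodule.subset_span
      rw [Set.mem_setOf_eq, mem_onList]
      exact ⟨m, hmn, rfl⟩
    exact (Submodule.mem_orthogonal _ _).1 (horth n) _ hmem
  refine ⟨e, hmemW, hV, ?_⟩
  rw [orthonormal_iff_ite]
  intro i j
  rcases lt_trichotomy i j with h | rfl | h
  · rw [if_neg h.ne, hlt _ _ h]
  · rw [if_pos rfl, inner_self_eq_norm_sq_to_K, hnorm]; norm_num
  · rw [if_neg h.ne', ← inner_conj_symm, hlt _ _ h, map_zero]

theorem isClosed_sup_fd (M V : Submodule ℂ H) (hM : IsClosed (M : Set H))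
    [FiniteDimensional ℂ V] : IsClosed ((M ⊔ V : Submodule ℂ H) : Set H) := by
  haveI : CompleteSpace M := hM.completeSpace_coe
  set Q : H →L[ℂ] H := ContinuousLinearMap.id ℂ H - M.subtypeL.comp (orthogonalProjection M)
    with hQ
  have hQA : ∀ x : H, Q x = x - ↑(orthogonalProjection M x) := fun x => rfl
  have hQo : ∀ x : H, Q x ∈ Mᗮ := fun x => by
    rw [hQA]; exact Submodule.sub_starProjection_mem_orthogonal (K := M) x
  have hQM : ∀ x ∈ M, Q x = 0 := fun x hx => by
    rw [hQA, sub_eq_zero, eq_comm]; exact Submodule.starProjection_eq_self_iff (K := M).mpr hx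
  have hQMo : ∀ x ∈ Mᗮ, Q x = x := fun x hx => by
    rw [hQA, Submodule.orthogonalProjectionOnto_apply_of_mem_orthogonal hx]
    simp
  set V' : Submodule ℂ H := V.map (Q : H →ₗ[ℂ] H) with hV'
  haveI : FiniteDimensional ℂ V' := Module.Finite.map _ _
  have hsub : ∀ x : H, x - Q x ∈ M := fun x => by
    rw [hQA]; simp
  have hsup : M ⊔ V = M ⊔ V' := by
    apply le_antisymm
    · refine sup_le le_sup_left fun v hv => ?_
      have : v = (v - Q v) + Q v := by abel
      rw [this]
      exact Submodule.add_mem _ (Submodule.mem_sup_left (hsub v))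
        (Submodule.mem_sup_right ⟨v, hv, rfl⟩)
    · refine sup_le le_sup_left ?_
      rintro _ ⟨v, hv, rfl⟩
      show Q v ∈ M ⊔ V
      have : Q v = -(v - Q v) + v := by abel
      rw [this]
      exact Submodule.add_mem _ (Submodule.mem_sup_left (Submodule.neg_mem _ (hsub v)))
        (Submodule.mem_sup_right hv)
  have hset : ((M ⊔ V' : Submodule ℂ H) : Set H) = ⇑Q ⁻¹' (V' : Set H) := by
    ext x
    simp only [SetLike.mem_coe, Set.mem_preimage]
    constructor
    · intro hx
      obtain ⟨m, hm, w, hw, rfl⟩ := Submodule.mem_sup.1 hx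
      obtain ⟨v, hv, rfl⟩ := hw
      show Q (m + Q v) ∈ V'
      rw [map_add, hQM m hm, zero_add, hQMo _ (hQo v)]
      exact ⟨v, hv, rfl⟩
    · intro hx
      have : x = (x - Q x) + Q x := by abel
      rw [this]
      exact Submodule.add_mem _ (Submodule.mem_sup_left (hsub x)) (Submodule.mem_sup_right hx)
  rw [hsup, hset]
  exact (V'.closed_of_finiteDimensional).preimage Q.continuous

theorem exists_bounded_preimage (T : H →L[ℂ] H)
    (hcl : IsClosed ((LinearMap.range (T : H →ₗ[ℂ] H) : Submodule ℂ H) : Set H)) :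
    ∃ c : ℝ, 0 < c ∧ ∀ x ∈ LinearMap.range (T : H →ₗ[ℂ] H), ∃ w, T w = x ∧ ‖w‖ ≤ c * ‖x‖ := by
  haveI : CompleteSpace (LinearMap.range (T : H →ₗ[ℂ] H)) := hcl.completeSpace_coe
  set T' : H →L[ℂ] (LinearMap.range (T : H →ₗ[ℂ] H)) :=
    T.codRestrict (LinearMap.range (T : H →ₗ[ℂ] H)) (fun x => LinearMap.mem_range_self _ x) with hT'
  have hsurj : Function.Surjective T' := by
    rintro ⟨_, w, rfl⟩
    exact ⟨w, rfl⟩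
  obtain ⟨C, Cpos, hC⟩ := ContinuousLinearMap.exists_preimage_norm_le T' hsurj
  refine ⟨C, Cpos, fun x hx => ?_⟩
  obtain ⟨w, hw, hwn⟩ := hC ⟨x, hx⟩
  exact ⟨w, congrArg Subtype.val hw, hwn⟩

theorem isClosed_map_of_bddBelow (T : H →L[ℂ] H) (U : Submodule ℂ H)
    (hU : IsClosed (U : Set H)) {c : ℝ} (hc : 0 < c) (hb : ∀ x ∈ U, c * ‖x‖ ≤ ‖T x‖) :
    IsClosed ((U.map (T : H →ₗ[ℂ] H) : Submodule ℂ H) : Set H) := by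
  haveI : CompleteSpace U := hU.completeSpace_coe
  set f : U →L[ℂ] H := T.comp U.subtypeL with hf
  have hanti : AntilipschitzWith (Real.toNNReal c⁻¹) f := by
    apply f.antilipschitz_of_bound
    intro x
    rw [Real.coe_toNNReal _ (by positivity)]
    have := hb x x.2
    have hx : f x = T ↑x := rfl
    rw [hx]
    rw [le_inv_mul_iff₀ hc]
    calc c * ‖x‖ = c * ‖(x : H)‖ := rfl
    _ ≤ ‖T ↑x‖ := this
  have hrange : Set.range ⇑f = ((U.map (T : H →ₗ[ℂ] H) : Submodule ℂ H) : Set H) := by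
    ext y
    simp only [Set.mem_range, SetLike.mem_coe, Submodule.mem_map]
    constructor
    · rintro ⟨u, rfl⟩
      exact ⟨u, u.2, rfl⟩
    · rintro ⟨x, hx, rfl⟩
      exact ⟨⟨x, hx⟩, rfl⟩
  rw [← hrange]
  exact hanti.isClosed_range f.uniformContinuous

theorem range_adjoint_eq (T : H →L[ℂ] H)
    (hcl : IsClosed ((LinearMap.range (T : H →ₗ[ℂ] H) : Submodule ℂ H) : Set H)) :
    LinearMap.range ((adjoint T : H →L[ℂ] H) : H →ₗ[ℂ] H) = (LinearMap.ker (T : H →ₗ[ℂ] H))ᗮ := by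
  haveI : CompleteSpace (LinearMap.range (T : H →ₗ[ℂ] H)) := hcl.completeSpace_coe
  haveI : CompleteSpace ((LinearMap.ker (T : H →ₗ[ℂ] H))ᗮ : Submodule ℂ H) :=
    (Submodule.isClosed_orthogonal _).completeSpace_coe
  haveI : CompleteSpace (LinearMap.ker (T : H →ₗ[ℂ] H)) := (ContinuousLinearMap.isClosed_ker T).completeSpace_coe
  apply le_antisymm
  · rintro _ ⟨y, rfl⟩
    rw [Submodule.mem_orthogonal]
    intro u hu
    rw [ContinuousLinearMap.coe_coe, ContinuousLinearMap.adjoint_inner_right, (show T u = 0 from LinearMap.mem_ker.1 hu), inner_zero_left]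
  · intro x hx
    set Kp : Submodule ℂ H := (LinearMap.ker (T : H →ₗ[ℂ] H))ᗮ with hKp
    set R : Submodule ℂ H := LinearMap.range (T : H →ₗ[ℂ] H) with hR
    set T' : Kp →L[ℂ] R :=
      (T.comp Kp.subtypeL).codRestrict R (fun w => LinearMap.mem_range_self _ _) with hT'
    have hT'app : ∀ w : Kp, (T' w : H) = T ↑w := fun w => rfl
    have hker : LinearMap.ker (T' : Kp →ₗ[ℂ] R) = ⊥ := by
      rw [Submodule.eq_bot_iff]
      rintro w hw
      rw [LinearMap.mem_ker] at hw
      have h1 : T ↑w = 0 := by rw [← hT'app]; exact congrArg Subtype.val hw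
      have h2 : (↑w : H) ∈ LinearMap.ker (T : H →ₗ[ℂ] H) := h1
      have := (Submodule.mem_orthogonal _ _).1 w.2 ↑w h2
      rw [inner_self_eq_zero] at this
      exact Subtype.ext this
    have hrange : LinearMap.range (T' : Kp →ₗ[ℂ] R) = ⊤ := by
      rw [LinearMap.range_eq_top]
      rintro ⟨_, w₀, rfl⟩
      set p : H := ↑(orthogonalProjection (LinearMap.ker (T : H →ₗ[ℂ] H)) w₀) with hp
      have hw₁ : w₀ - p ∈ Kp := Submodule.sub_starProjection_mem_orthogonal (K := LinearMap.ker (T : H →ₗ[ℂ] H)) w₀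
      refine ⟨⟨w₀ - p, hw₁⟩, ?_⟩
      apply Subtype.ext
      rw [ContinuousLinearMap.coe_coe, hT'app]
      show T (w₀ - p) = T w₀
      rw [map_sub, (show T p = 0 from LinearMap.mem_ker.1 (orthogonalProjection (LinearMap.ker (T : H →ₗ[ℂ] H)) w₀).2),
        sub_zero]
    set E := ContinuousLinearEquiv.ofBijective T' hker hrange with hE
    have hEapp : ∀ w : Kp, E w = T' w := fun w =>
      congrFun (ContinuousLinearEquiv.coeFn_ofBijective T' hker hrange) w
    set A : Kp →L[ℂ] R := adjoint (E.symm : R →L[ℂ] Kp) with hA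
    set y : R := A ⟨x, hx⟩ with hy
    refine ⟨↑y, ?_⟩
    apply ext_inner_left ℂ
    intro v
    rw [ContinuousLinearMap.coe_coe, ContinuousLinearMap.adjoint_inner_right]
    set p : H := ↑(orthogonalProjection (LinearMap.ker (T : H →ₗ[ℂ] H)) v) with hp
    have hv₁ : v - p ∈ Kp := Submodule.sub_starProjection_mem_orthogonal (K := LinearMap.ker (T : H →ₗ[ℂ] H)) v
    have hTv : T v = T (v - p) := by
      rw [map_sub, (show T p = 0 from LinearMap.mem_ker.1 (orthogonalProjection (LinearMap.ker (T : H →ₗ[ℂ] H)) v).2),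
        sub_zero]
    have key : T (v - p) = ↑(E ⟨v - p, hv₁⟩) := by rw [hEapp]; rfl
    rw [hTv, key, ← Submodule.coe_inner, hy, hA, ContinuousLinearMap.adjoint_inner_right]
    have : (E.symm : R →L[ℂ] Kp) (E ⟨v - p, hv₁⟩) = ⟨v - p, hv₁⟩ := by
      rw [ContinuousLinearEquiv.coe_coe, ContinuousLinearEquiv.symm_apply_apply]
    rw [this, Submodule.coe_inner]
    show ⟪v - p, x⟫ = ⟪v, x⟫
    rw [inner_sub_left]
    have : ⟪p, x⟫ = 0 := (Submodule.mem_orthogonal _ _).1 hx p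
      (orthogonalProjection (LinearMap.ker (T : H →ₗ[ℂ] H)) v).2
    rw [this, sub_zero]

theorem range_adjoint_isClosed (T : H →L[ℂ] H)
    (hcl : IsClosed ((LinearMap.range (T : H →ₗ[ℂ] H) : Submodule ℂ H) : Set H)) :
    IsClosed ((LinearMap.range ((adjoint T : H →L[ℂ] H) : H →ₗ[ℂ] H) : Submodule ℂ H) : Set H) := by
  rw [range_adjoint_eq T hcl]
  exact Submodule.isClosed_orthogonal _

def BddBelowModFD (T : H →L[ℂ] H) : Prop :=
  ∃ c : ℝ, 0 < c ∧ ∃ V : Submodule ℂ H, FiniteDimensional ℂ V ∧ ∀ x ∈ Vᗮ, c * ‖x‖ ≤ ‖T x‖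

theorem bb_of_lsf (F : H →L[ℂ] H)
    (h1 : IsClosed ((LinearMap.range (F : H →ₗ[ℂ] H) : Submodule ℂ H) : Set H))
    (h2 : FiniteDimensional ℂ ((LinearMap.range (F : H →ₗ[ℂ] H))ᗮ : Submodule ℂ H)) :
    BddBelowModFD (adjoint F) := by
  obtain ⟨c, hc, hsol⟩ := exists_bounded_preimage F h1
  haveI : CompleteSpace (LinearMap.range (F : H →ₗ[ℂ] H)) := h1.completeSpace_coe
  refine ⟨c⁻¹, by positivity, (LinearMap.range (F : H →ₗ[ℂ] H))ᗮ, h2, ?_⟩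
  intro x hx
  rw [Submodule.orthogonal_orthogonal] at hx
  obtain ⟨w, hw, hwn⟩ := hsol x hx
  rcases eq_or_ne x 0 with rfl | hx0
  · simp
  have h1' : ‖x‖^2 ≤ ‖adjoint F x‖ * ‖w‖ := by
    have hh := ContinuousLinearMap.adjoint_inner_left F w x
    rw [hw] at hh
    calc ‖x‖^2 = ‖(⟪x, x⟫ : ℂ)‖ := by
          rw [inner_self_eq_norm_sq_to_K]; simp [RCLike.norm_ofReal]
    _ = ‖(⟪adjoint F x, w⟫ : ℂ)‖ := by rw [hh]
    _ ≤ ‖adjoint F x‖ * ‖w‖ := norm_inner_le_norm _ _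
  have hxpos : 0 < ‖x‖ := norm_pos_iff.2 hx0
  have h3' : ‖x‖^2 ≤ ‖adjoint F x‖ * (c * ‖x‖) :=
    h1'.trans (mul_le_mul_of_nonneg_left hwn (norm_nonneg _))
  rw [inv_mul_le_iff₀ hc]
  nlinarith [h3', hxpos, hc]

theorem lsf_of_bb (F : H →L[ℂ] H) (h : BddBelowModFD (adjoint F)) :
    IsClosed ((LinearMap.range (F : H →ₗ[ℂ] H) : Submodule ℂ H) : Set H) ∧
      FiniteDimensional ℂ ((LinearMap.range (F : H →ₗ[ℂ] H))ᗮ : Submodule ℂ H) := by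
  obtain ⟨c, hc, V, hV, hb⟩ := h
  haveI := hV
  set T := adjoint F with hT
  constructor
  · have hTcl : IsClosed ((LinearMap.range (T : H →ₗ[ℂ] H) : Submodule ℂ H) : Set H) := by
      have htop : Vᗮ ⊔ V = ⊤ := by
        rw [sup_comm]
        exact Submodule.sup_orthogonal_of_hasOrthogonalProjection
      have : LinearMap.range (T : H →ₗ[ℂ] H) = (Vᗮ.map (T : H →ₗ[ℂ] H)) ⊔ (V.map (T : H →ₗ[ℂ] H)) := by
        rw [← Submodule.map_sup, htop, Submodule.map_top]
      rw [this]
      haveI : FiniteDimensional ℂ (V.map (T : H →ₗ[ℂ] H)) := Module.Finite.map _ _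
      exact isClosed_sup_fd _ _ (isClosed_map_of_bddBelow T Vᗮ
        (Submodule.isClosed_orthogonal _) hc hb)
    have := range_adjoint_isClosed T hTcl
    rwa [hT, ContinuousLinearMap.adjoint_adjoint] at this
  · rw [← my_ker_adjoint]
    haveI : CompleteSpace V := FiniteDimensional.complete ℂ V
    set f : (LinearMap.ker (T : H →ₗ[ℂ] H) : Submodule ℂ H) →ₗ[ℂ] V :=
      ((orthogonalProjection V : H →L[ℂ] V) : H →ₗ[ℂ] V).comp (LinearMap.ker (T : H →ₗ[ℂ] H)).subtype with hf
    have hinj : Function.Injective f := by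
      rw [← LinearMap.ker_eq_bot, Submodule.eq_bot_iff]
      rintro ⟨x, hxk⟩ hxf
      rw [LinearMap.mem_ker] at hxf
      have hxo : x ∈ Vᗮ := Submodule.orthogonalProjectionOnto_eq_zero_iff.1 hxf
      have := hb x hxo
      rw [(show T x = 0 from LinearMap.mem_ker.1 hxk), norm_zero] at this
      have : ‖x‖ ≤ 0 := by nlinarith [norm_nonneg x]
      ext
      simpa using le_antisymm this (norm_nonneg x)
    exact FiniteDimensional.of_injective f hinj

theorem fd_ker_of_bb (T : H →L[ℂ] H) (h : BddBelowModFD T) (K : H →L[ℂ] H)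
    (hK : IsCompactOperator ⇑K) :
    FiniteDimensional ℂ (LinearMap.ker ((T - adjoint K : H →L[ℂ] H) : H →ₗ[ℂ] H) : Submodule ℂ H) := by
  by_contra hW
  obtain ⟨c, hc, V, hV, hb⟩ := h
  haveI := hV
  obtain ⟨e, heW, heV, hon⟩ := exists_orthonormal_seq (LinearMap.ker ((T - adjoint K : H →L[ℂ] H) : H →ₗ[ℂ] H)) V hW
  set S : H →L[ℂ] H := K.comp (adjoint K) with hS
  have hScpt : IsCompactOperator ⇑S := hK.comp_clm (adjoint K)
  -- image of closed unit ball is relatively compact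
  have hbd : Bornology.IsBounded (closedBall (0 : H) 1) := isBounded_closedBall
  have hCc : IsCompact (closure (⇑S '' closedBall (0 : H) 1)) :=
    hScpt.isCompact_closure_image_of_bounded hbd
  have hsmem : ∀ n, S (e n) ∈ closure (⇑S '' closedBall (0 : H) 1) := fun n =>
    subset_closure ⟨e n, by simp [mem_closedBall, (hon.1 n).le, dist_zero_right, hon.1 n], rfl⟩
  -- key separation estimate
  have hTK : ∀ x ∈ LinearMap.ker ((T - adjoint K : H →L[ℂ] H) : H →ₗ[ℂ] H), T x = adjoint K x := by
    intro x hx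
    have : (T - adjoint K) x = 0 := LinearMap.mem_ker.1 hx
    rw [ContinuousLinearMap.sub_apply, sub_eq_zero] at this
    exact this
  have hsep : ∀ m n, m ≠ n → Real.sqrt 2 * c^2 ≤ ‖S (e m) - S (e n)‖ := by
    intro m n hmn
    set z : H := e m - e n with hz
    have hzW : z ∈ LinearMap.ker ((T - adjoint K : H →L[ℂ] H) : H →ₗ[ℂ] H) := Submodule.sub_mem _ (heW m) (heW n)
    have hzV : z ∈ Vᗮ := Submodule.sub_mem _ (heV m) (heV n)
    have hz2 : ‖z‖^2 = 2 := by
      rw [hz, @norm_sub_sq ℂ]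
      rw [hon.2 hmn]
      simp [hon.1 m, hon.1 n]
      norm_num
    have hznorm : ‖z‖ = Real.sqrt 2 := by
      rw [← hz2, Real.sqrt_sq (norm_nonneg _)]
    have hTz : ‖T z‖ = ‖adjoint K z‖ := by rw [hTK z hzW]
    have hKz2 : ‖adjoint K z‖^2 ≤ ‖z‖ * ‖S z‖ := by
      have h1 : (⟪adjoint K z, adjoint K z⟫ : ℂ) = ⟪z, S z⟫ :=
        ContinuousLinearMap.adjoint_inner_left K (adjoint K z) z
      calc ‖adjoint K z‖^2 = ‖(⟪adjoint K z, adjoint K z⟫ : ℂ)‖ := by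
            rw [inner_self_eq_norm_sq_to_K]; simp [RCLike.norm_ofReal]
      _ = ‖(⟪z, S z⟫ : ℂ)‖ := by rw [h1]
      _ ≤ ‖z‖ * ‖S z‖ := norm_inner_le_norm _ _
    have hlow : c * ‖z‖ ≤ ‖adjoint K z‖ := hTz ▸ hb z hzV
    have hSz : S z = S (e m) - S (e n) := by rw [hz, map_sub]
    rw [← hSz]
    have h2 : c^2 * (‖z‖^2) ≤ ‖z‖ * ‖S z‖ := by
      calc c^2 * ‖z‖^2 = (c * ‖z‖)^2 := by ring
      _ ≤ ‖adjoint K z‖^2 := by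
          apply pow_le_pow_left₀ (by positivity) hlow
      _ ≤ ‖z‖ * ‖S z‖ := hKz2
    rw [hz2, hznorm] at h2
    nlinarith [h2, Real.sq_sqrt (by norm_num : (0:ℝ) ≤ 2),
      Real.sqrt_pos.2 (by norm_num : (0:ℝ) < 2), sq_nonneg c, norm_nonneg (S z)]
  exact no_separated_seq hCc (fun n => S (e n)) hsmem hsep
    (by positivity)

theorem exists_unit_small (T : H →L[ℂ] H) (hnb : ¬ BddBelowModFD T) (U : Submodule ℂ H)
    [FiniteDimensional ℂ U] {c : ℝ} (hc : 0 < c) :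
    ∃ x : H, x ∈ Uᗮ ∧ ‖x‖ = 1 ∧ ‖T x‖ < c := by
  rw [BddBelowModFD] at hnb
  push_neg at hnb
  obtain ⟨x, hxU, hxlt⟩ := hnb c hc U ‹_›
  have hx0 : x ≠ 0 := by
    rintro rfl
    rw [norm_zero, mul_zero] at hxlt
    exact (norm_nonneg _).not_gt hxlt
  have hxpos : 0 < ‖x‖ := norm_pos_iff.2 hx0
  refine ⟨‖x‖⁻¹ • x, Submodule.smul_mem _ _ hxU, ?_, ?_⟩
  · rw [norm_smul, norm_inv, norm_norm, inv_mul_cancel₀ hxpos.ne']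
  · rw [ContinuousLinearMap.map_smul_of_tower, norm_smul, norm_inv, norm_norm]
    rw [inv_mul_lt_iff₀ hxpos]
    linarith [hxlt]

variable (T : H →L[ℂ] H)

noncomputable def pickSm (hnb : ¬ BddBelowModFD T) (l : List H) : H :=
  haveI := FiniteDimensional.span_of_finite ℂ l.finite_toSet
  Classical.choose (exists_unit_small T hnb (span ℂ {x | x ∈ l})
    (pow_pos (by norm_num : (0:ℝ) < 1/2) l.length))

theorem pickSm_spec (hnb : ¬ BddBelowModFD T) (l : List H) :
    pickSm T hnb l ∈ (span ℂ {x | x ∈ l})ᗮ ∧ ‖pickSm T hnb l‖ = 1 ∧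
      ‖T (pickSm T hnb l)‖ < (1/2)^l.length :=
  haveI := FiniteDimensional.span_of_finite ℂ l.finite_toSet
  Classical.choose_spec (exists_unit_small T hnb (span ℂ {x | x ∈ l})
    (pow_pos (by norm_num : (0:ℝ) < 1/2) l.length))

noncomputable def smList (hnb : ¬ BddBelowModFD T) : ℕ → List H
  | 0 => []
  | n+1 => pickSm T hnb (smList hnb n) :: smList hnb n

noncomputable def smSeq (hnb : ¬ BddBelowModFD T) (n : ℕ) : H :=
  pickSm T hnb (smList T hnb n)

theorem smList_length (hnb : ¬ BddBelowModFD T) (n : ℕ) : (smList T hnb n).length = n := by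
  induction n with
  | zero => rfl
  | succ n ih => simp [smList, ih]

theorem mem_smList (hnb : ¬ BddBelowModFD T) (n : ℕ) (x : H) :
    x ∈ smList T hnb n ↔ ∃ m, m < n ∧ x = smSeq T hnb m := by
  induction n with
  | zero => simp [smList]
  | succ n ih =>
      simp only [smList, List.mem_cons, ih]
      constructor
      · rintro (rfl | ⟨m, hm, rfl⟩)
        · exact ⟨n, Nat.lt_succ_self n, rfl⟩
        · exact ⟨m, hm.trans (Nat.lt_succ_self n), rfl⟩
      · rintro ⟨m, hm, rfl⟩
        rcases Nat.lt_succ_iff_lt_or_eq.1 hm with h | rfl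
        · exact Or.inr ⟨m, h, rfl⟩
        · exact Or.inl rfl

theorem smSeq_orthonormal (hnb : ¬ BddBelowModFD T) : Orthonormal ℂ (smSeq T hnb) ∧
    ∀ n, ‖T (smSeq T hnb n)‖ < (1/2)^n := by
  set e := smSeq T hnb with he
  have spec := fun n => pickSm_spec T hnb (smList T hnb n)
  have hnorm : ∀ n, ‖e n‖ = 1 := fun n => (spec n).2.1
  have hsmall : ∀ n, ‖T (e n)‖ < (1/2)^n := fun n => by
    have := (spec n).2.2
    rwa [smList_length] at this
  have hlt : ∀ m n, m < n → ⟪e m, e n⟫ = 0 := by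
    intro m n hmn
    have hmem : e m ∈ span ℂ {x | x ∈ smList T hnb n} := by
      apply Submodule.subset_span
      rw [Set.mem_setOf_eq, mem_smList]
      exact ⟨m, hmn, rfl⟩
    exact (Submodule.mem_orthogonal _ _).1 (spec n).1 _ hmem
  refine ⟨?_, hsmall⟩
  rw [orthonormal_iff_ite]
  intro i j
  rcases lt_trichotomy i j with h | rfl | h
  · rw [if_neg h.ne, hlt _ _ h]
  · rw [if_pos rfl, inner_self_eq_norm_sq_to_K, hnorm]; norm_num
  · rw [if_neg h.ne', ← inner_conj_symm, hlt _ _ h, map_zero]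

theorem exists_compact_of_not_bb (hnb : ¬ BddBelowModFD T) :
    ∃ K : H →L[ℂ] H, IsCompactOperator ⇑K ∧
      ¬ FiniteDimensional ℂ (LinearMap.ker ((T - adjoint K : H →L[ℂ] H) : H →ₗ[ℂ] H) : Submodule ℂ H) := by
  obtain ⟨hon, hsmall⟩ := smSeq_orthonormal T hnb
  set e := smSeq T hnb with he
  set g : ℕ → H →L[ℂ] H := fun n => rankOne (e n) (T (e n)) with hg
  set g' : ℕ → H →L[ℂ] H := fun n => rankOne (T (e n)) (e n) with hg'
  have hbound : ∀ n, ‖g n‖ ≤ (1/2:ℝ)^n := fun n => by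
    calc ‖g n‖ ≤ ‖e n‖ * ‖T (e n)‖ := norm_rankOne_le _ _
    _ = ‖T (e n)‖ := by rw [hon.1 n, one_mul]
    _ ≤ (1/2)^n := (hsmall n).le
  have hbound' : ∀ n, ‖g' n‖ ≤ (1/2:ℝ)^n := fun n => by
    calc ‖g' n‖ ≤ ‖T (e n)‖ * ‖e n‖ := norm_rankOne_le _ _
    _ = ‖T (e n)‖ := by rw [hon.1 n, mul_one]
    _ ≤ (1/2)^n := (hsmall n).le
  have hsum : Summable g := by
    apply Summable.of_norm
    exact Summable.of_nonneg_of_le (fun n => norm_nonneg _) hbound summable_geometric_two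
  have hsum' : Summable g' := by
    apply Summable.of_norm
    exact Summable.of_nonneg_of_le (fun n => norm_nonneg _) hbound' summable_geometric_two
  set C : H →L[ℂ] H := ∑' n, g n with hC
  set K : H →L[ℂ] H := ∑' n, g' n with hK
  have hKcpt : IsCompactOperator ⇑K := isCompactOperator_tsum g' hsum'
    (fun n => isCompactOperator_rankOne _ _)
  have hadj : adjoint K = C := by
    have hQP : ∀ N : ℕ, adjoint (∑ n ∈ Finset.range N, g' n) = ∑ n ∈ Finset.range N, g n := by
      intro N
      rw [map_sum]
      exact Finset.sum_congr rfl fun n _ => adjoint_rankOne _ _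
    have t1 : Filter.Tendsto (fun N => ∑ n ∈ Finset.range N, g' n) Filter.atTop (nhds K) :=
      hsum'.hasSum.tendsto_sum_nat
    have t2 : Filter.Tendsto (fun N => adjoint (∑ n ∈ Finset.range N, g' n)) Filter.atTop
        (nhds (adjoint K)) := (ContinuousLinearMap.adjoint.continuous.tendsto K).comp t1
    rw [funext hQP] at t2
    exact tendsto_nhds_unique t2 hsum.hasSum.tendsto_sum_nat
  have hCe : ∀ m, C (e m) = T (e m) := by
    intro m
    have h1 : HasSum (fun n => g n (e m)) (C (e m)) := by
      have := hsum.hasSum.mapL (ContinuousLinearMap.apply ℂ H (e m))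
      simpa using this
    have h2 : (fun n => g n (e m)) = fun n => if n = m then T (e m) else 0 := by
      funext n
      rcases eq_or_ne n m with rfl | hnm
      · rw [hg, rankOne_apply, inner_self_eq_norm_sq_to_K, hon.1 n]
        norm_num
      · rw [hg, rankOne_apply, hon.2 hnm, zero_smul, if_neg hnm]
    rw [h2] at h1
    have h3 : HasSum (fun n => if n = m then T (e m) else 0) (T (e m)) := hasSum_ite_eq m _
    exact tendsto_nhds_unique h1.tendsto_sum_nat h3.tendsto_sum_nat
  refine ⟨K, hKcpt, fun hfin => ?_⟩
  have hker : ∀ m, e m ∈ LinearMap.ker ((T - adjoint K : H →L[ℂ] H) : H →ₗ[ℂ] H) := by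
    intro m
    rw [LinearMap.mem_ker, ContinuousLinearMap.coe_coe, ContinuousLinearMap.sub_apply, hadj, hCe, sub_self]
  set e' : ℕ → (LinearMap.ker ((T - adjoint K : H →L[ℂ] H) : H →ₗ[ℂ] H) : Submodule ℂ H) := fun n => ⟨e n, hker n⟩ with he'
  have hli : LinearIndependent ℂ e' := by
    apply LinearIndependent.of_comp (LinearMap.ker ((T - adjoint K : H →L[ℂ] H) : H →ₗ[ℂ] H)).subtype
    have : (LinearMap.ker ((T - adjoint K : H →L[ℂ] H) : H →ₗ[ℂ] H)).subtype ∘ e' = e := rfl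
    rw [this]
    exact hon.linearIndependent
  exact Module.Finite.not_linearIndependent_of_infinite e' hli

theorem c03_adjoint_sub (A B : H →L[ℂ] H) : adjoint (A - B) = adjoint A - adjoint B := by
  symm
  refine (ContinuousLinearMap.eq_adjoint_iff _ _).2 fun x y => ?_
  simp only [ContinuousLinearMap.sub_apply, inner_sub_left, inner_sub_right,
    ContinuousLinearMap.adjoint_inner_left]

end C03Aux

/-- Corollary C03, Hilbert space case: on a separable Hilbert space, `F` is lower
semi-Fredholm (closed range with finite-dimensional orthogonal complement) iff
`(Im (F - K))ᗮ` is finite-dimensional for every compact operator `K`. -/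
theorem stmt_13 {H : Type*} [NormedAddCommGroup H] [InnerProductSpace ℂ H] [CompleteSpace H]
    [TopologicalSpace.SeparableSpace H] (F : H →L[ℂ] H) :
    (IsClosed ((LinearMap.range (F : H →ₗ[ℂ] H) : Submodule ℂ H) : Set H) ∧
        FiniteDimensional ℂ ((LinearMap.range (F : H →ₗ[ℂ] H))ᗮ : Submodule ℂ H)) ↔
      ∀ K : H →L[ℂ] H, IsCompactOperator K →
        FiniteDimensional ℂ ((LinearMap.range ((F - K : H →L[ℂ] H) : H →ₗ[ℂ] H))ᗮ : Submodule ℂ H) := by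
  have heq : ∀ K : H →L[ℂ] H,
      LinearMap.ker ((ContinuousLinearMap.adjoint F - ContinuousLinearMap.adjoint K : H →L[ℂ] H) : H →ₗ[ℂ] H)
        = (LinearMap.range ((F - K : H →L[ℂ] H) : H →ₗ[ℂ] H))ᗮ := fun K => by
    rw [← c03_adjoint_sub, my_ker_adjoint]
  constructor
  · rintro ⟨h1, h2⟩ K hK
    have hbb := bb_of_lsf F h1 h2
    have hfin := fd_ker_of_bb (ContinuousLinearMap.adjoint F) hbb K hK
    rwa [heq K] at hfin
  · intro hall
    have hbb : BddBelowModFD (ContinuousLinearMap.adjoint F) := by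
      by_contra hnb
      obtain ⟨K, hK, hker⟩ := exists_compact_of_not_bb (ContinuousLinearMap.adjoint F) hnb
      apply hker
      have hfin := hall K hK
      rwa [← heq K] at hfin
    exact lsf_of_bb F hbb
end

section
/- Let H be a Hilbert space and F, G bounded operators on H with closed ranges such that Im(G∘F) is closed. Then, with X a closed subspace satisfying Im G = Im(G∘F) ⊕ X and M' a closed subspace satisfying ker G = (ker G ∩ Im F) ⊕ M', the orthogonal complement (Im F)^⊥ is isomorphic (via a bounded linear isomorphism) to X ⊕ M', and (Im(G∘F))^⊥ is isomorphic to X ⊕ (Im G)^⊥. -/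
open Submodule LinearMap

noncomputable def mkQL {H : Type*} [NormedAddCommGroup H] [InnerProductSpace ℂ H]
    (p : Submodule ℂ H) : H →L[ℂ] H ⧸ p :=
  p.mkQ.mkContinuous 1 fun m => by
    simpa using Submodule.Quotient.norm_mk_le p m

lemma equiv_quot_aux {H : Type*} [NormedAddCommGroup H] [InnerProductSpace ℂ H] [CompleteSpace H]
    {W : Type*} [NormedAddCommGroup W] [NormedSpace ℂ W] [CompleteSpace W]
    (p : Submodule ℂ H) (hp : IsClosed (p : Set H)) (f : W →L[ℂ] H)
    (hinj : ∀ w, f w ∈ p → w = 0) (hsurj : ∀ h : H, ∃ w, h - f w ∈ p) :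
    Nonempty (W ≃L[ℂ] H ⧸ p) := by
  haveI := hp
  refine ⟨ContinuousLinearEquiv.ofBijective ((_root_.mkQL p).comp f) ?_ ?_⟩
  · rw [LinearMap.ker_eq_bot']
    intro w hw
    apply hinj w
    have : (_root_.mkQL p) (f w) = 0 := hw
    rwa [_root_.mkQL, LinearMap.mkContinuous_apply, Submodule.mkQ_apply,
      Submodule.Quotient.mk_eq_zero] at this
  · rw [LinearMap.range_eq_top]
    intro q
    obtain ⟨h, rfl⟩ := Submodule.Quotient.mk_surjective p q
    obtain ⟨w, hw⟩ := hsurj h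
    refine ⟨w, ?_⟩
    show (_root_.mkQL p) (f w) = _
    rw [_root_.mkQL, LinearMap.mkContinuous_apply, Submodule.mkQ_apply]
    rw [Submodule.Quotient.eq]
    simpa using neg_mem hw

lemma orth_equiv_quot {H : Type*} [NormedAddCommGroup H] [InnerProductSpace ℂ H] [CompleteSpace H]
    (p : Submodule ℂ H) (hp : IsClosed (p : Set H)) :
    Nonempty ((pᗮ : Submodule ℂ H) ≃L[ℂ] H ⧸ p) := by
  haveI := hp.completeSpace_coe
  apply equiv_quot_aux p hp pᗮ.subtypeL
  · intro w hw
    have : (w : H) ∈ p ⊓ pᗮ := ⟨hw, w.2⟩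
    rw [Submodule.inf_orthogonal_eq_bot] at this
    exact Subtype.ext this
  · intro h
    have : h ∈ p ⊔ pᗮ := by rw [Submodule.sup_orthogonal_of_hasOrthogonalProjection]; trivial
    obtain ⟨y, hy, z, hz, rfl⟩ := Submodule.mem_sup.1 this
    exact ⟨⟨z, hz⟩, by simpa using hy⟩

/-- Structural content of Proposition P03, Hilbert space case: for `F, G` with
closed ranges and `Im (G∘F)` closed, given complements `X` of `Im (G∘F)` in
`Im G` and `M'` of `ker G ∩ Im F` in `ker G`, one has `(Im F)ᗮ ≅ X ⊕ M'` and
`(Im (G∘F))ᗮ ≅ X ⊕ (Im G)ᗮ` via continuous linear equivalences. -/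
theorem stmt_17 {H : Type*} [NormedAddCommGroup H] [InnerProductSpace ℂ H] [CompleteSpace H]
    (F G : H →L[ℂ] H)
    (hF : IsClosed ((LinearMap.range (F : H →ₗ[ℂ] H) : Submodule ℂ H) : Set H))
    (hG : IsClosed ((LinearMap.range (G : H →ₗ[ℂ] H) : Submodule ℂ H) : Set H))
    (hGF : IsClosed ((LinearMap.range ((G.comp F : H →L[ℂ] H) : H →ₗ[ℂ] H) : Submodule ℂ H) : Set H))
    (X M' : Submodule ℂ H)
    (hX : IsClosed (X : Set H)) (hM' : IsClosed (M' : Set H))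
    (hX1 : Disjoint (LinearMap.range ((G.comp F : H →L[ℂ] H) : H →ₗ[ℂ] H)) X)
    (hX2 : LinearMap.range ((G.comp F : H →L[ℂ] H) : H →ₗ[ℂ] H) ⊔ X = LinearMap.range (G : H →ₗ[ℂ] H))
    (hM1 : Disjoint (LinearMap.ker (G : H →ₗ[ℂ] H) ⊓ LinearMap.range (F : H →ₗ[ℂ] H)) M')
    (hM2 : (LinearMap.ker (G : H →ₗ[ℂ] H) ⊓ LinearMap.range (F : H →ₗ[ℂ] H)) ⊔ M' = LinearMap.ker (G : H →ₗ[ℂ] H)) :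
    Nonempty (((LinearMap.range (F : H →ₗ[ℂ] H))ᗮ : Submodule ℂ H) ≃L[ℂ] (X × M')) ∧
    Nonempty (((LinearMap.range ((G.comp F : H →L[ℂ] H) : H →ₗ[ℂ] H))ᗮ : Submodule ℂ H) ≃L[ℂ]
      (X × ((LinearMap.range (G : H →ₗ[ℂ] H))ᗮ : Submodule ℂ H))) := by
  haveI := hX.completeSpace_coe
  haveI := hM'.completeSpace_coe
  haveI := hG.completeSpace_coe
  haveI := (Submodule.isClosed_orthogonal (LinearMap.range (G : H →ₗ[ℂ] H))).completeSpace_coe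
  have hkerGclosed : IsClosed ((LinearMap.ker (G : H →ₗ[ℂ] H) : Submodule ℂ H) : Set H) :=
    ContinuousLinearMap.isClosed_ker G
  haveI := hkerGclosed.completeSpace_coe
  haveI := (Submodule.isClosed_orthogonal (LinearMap.ker (G : H →ₗ[ℂ] H))).completeSpace_coe
  have hXle : X ≤ LinearMap.range (G : H →ₗ[ℂ] H) := by rw [← hX2]; exact le_sup_right
  have hM'le : M' ≤ LinearMap.ker (G : H →ₗ[ℂ] H) := by rw [← hM2]; exact le_sup_right
  -- the continuous inverse of G from range G to (ker G)ᗮ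
  set K : Submodule ℂ H := (LinearMap.ker (G : H →ₗ[ℂ] H))ᗮ with hKdef
  have hGmem : ∀ k : K, G (k : H) ∈ LinearMap.range (G : H →ₗ[ℂ] H) := fun k => ⟨(k : H), rfl⟩
  set G' : K →L[ℂ] (LinearMap.range (G : H →ₗ[ℂ] H) : Submodule ℂ H) :=
    (G.comp K.subtypeL).codRestrict _ hGmem with hG'def
  have hker : LinearMap.ker (G' : K →ₗ[ℂ] (LinearMap.range (G : H →ₗ[ℂ] H))) = ⊥ := by
    rw [LinearMap.ker_eq_bot']
    intro k hk
    have hk' : G (k : H) = 0 := congrArg Subtype.val hk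
    have : (k : H) ∈ LinearMap.ker (G : H →ₗ[ℂ] H) ⊓ (LinearMap.ker (G : H →ₗ[ℂ] H))ᗮ := ⟨hk', k.2⟩
    rw [Submodule.inf_orthogonal_eq_bot] at this
    exact Subtype.ext this
  have hrange : LinearMap.range (G' : K →ₗ[ℂ] (LinearMap.range (G : H →ₗ[ℂ] H))) = ⊤ := by
    rw [LinearMap.range_eq_top]
    rintro ⟨g, hg⟩
    obtain ⟨h, rfl⟩ := hg
    have : h ∈ LinearMap.ker (G : H →ₗ[ℂ] H) ⊔ (LinearMap.ker (G : H →ₗ[ℂ] H))ᗮ := by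
      rw [Submodule.sup_orthogonal_of_hasOrthogonalProjection]; trivial
    obtain ⟨n, hn, k, hk, rfl⟩ := Submodule.mem_sup.1 this
    refine ⟨⟨k, hk⟩, Subtype.ext ?_⟩
    show G k = G (n + k)
    have hGn : G n = 0 := hn
    simp [map_add, hn, hGn]
  set eG : K ≃L[ℂ] (LinearMap.range (G : H →ₗ[ℂ] H) : Submodule ℂ H) :=
    ContinuousLinearEquiv.ofBijective G' hker hrange with heGdef
  set inclX : X →L[ℂ] (LinearMap.range (G : H →ₗ[ℂ] H) : Submodule ℂ H) :=
    { toLinearMap := Submodule.inclusion hXle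
      cont := Continuous.subtype_mk continuous_subtype_val _ } with hinclXdef
  set A : X →L[ℂ] H := K.subtypeL.comp (eG.symm.toContinuousLinearMap.comp inclX) with hAdef
  have hGA : ∀ x : X, G (A x) = (x : H) := by
    intro x
    have h1 : eG (eG.symm (inclX x)) = inclX x := eG.apply_symm_apply _
    have h2 : (eG (eG.symm (inclX x)) : H) = G (A x) := by
      rw [show ⇑eG = ⇑G' from ContinuousLinearEquiv.coeFn_ofBijective G' hker hrange]
      rfl
    rw [← h2, h1]
    rfl
  constructor
  · -- (range F)ᗮ ≃L X × M'
    set f₁ : (X × M') →L[ℂ] H :=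
      A.comp (ContinuousLinearMap.fst ℂ X M') +
        M'.subtypeL.comp (ContinuousLinearMap.snd ℂ X M') with hf₁def
    have hf₁ : ∀ w : X × M', f₁ w = A w.1 + (w.2 : H) := fun w => rfl
    have hinj : ∀ w : X × M', f₁ w ∈ LinearMap.range (F : H →ₗ[ℂ] H) → w = 0 := by
      rintro ⟨x, m⟩ hw
      obtain ⟨a, ha⟩ := hw
      rw [hf₁] at ha
      have hGm : G (m : H) = 0 := hM'le m.2
      have hGFa : (G.comp F) a = (x : H) := by
        have := congrArg G ha
        simpa [map_add, hGA, hGm] using this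
      have hx0 : (x : H) = 0 := by
        have : (x : H) ∈ LinearMap.range ((G.comp F : H →L[ℂ] H) : H →ₗ[ℂ] H) ⊓ X := ⟨⟨a, hGFa⟩, x.2⟩
        rw [hX1.eq_bot] at this
        exact this
      have hA0 : A x = 0 := by
        have : x = 0 := Subtype.ext hx0
        rw [this, map_zero]
      have hm : (m : H) = F a := by
        rw [hA0, zero_add] at ha; exact ha.symm
      have hm0 : (m : H) = 0 := by
        have : (m : H) ∈ (LinearMap.ker (G : H →ₗ[ℂ] H) ⊓ LinearMap.range (F : H →ₗ[ℂ] H)) ⊓ M' :=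
          ⟨⟨hGm, ⟨a, hm.symm⟩⟩, m.2⟩
        rw [hM1.eq_bot] at this
        exact this
      exact Prod.ext (Subtype.ext hx0) (Subtype.ext hm0)
    have hsurj : ∀ h : H, ∃ w : X × M', h - f₁ w ∈ LinearMap.range (F : H →ₗ[ℂ] H) := by
      intro h
      have : G h ∈ LinearMap.range ((G.comp F : H →L[ℂ] H) : H →ₗ[ℂ] H) ⊔ X := by rw [hX2]; exact ⟨h, rfl⟩
      obtain ⟨q, hq, x, hx, hsum⟩ := Submodule.mem_sup.1 this
      obtain ⟨a, ha⟩ := hq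
      have hker' : h - F a - A ⟨x, hx⟩ ∈ LinearMap.ker (G : H →ₗ[ℂ] H) := by
        have : G (h - F a - A ⟨x, hx⟩) = 0 := by
          rw [map_sub, map_sub, hGA]
          have : G (F a) = q := ha
          rw [this]
          have : G h = q + x := hsum.symm
          rw [this]; abel
        exact this
      rw [← hM2] at hker'
      obtain ⟨k, hk, m, hm, hkm⟩ := Submodule.mem_sup.1 hker'
      obtain ⟨b, hb⟩ := hk.2
      refine ⟨(⟨x, hx⟩, ⟨m, hm⟩), ?_⟩
      rw [hf₁]
      refine ⟨a + b, ?_⟩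
      rw [map_add, hb]
      show F a + k = h - (A ⟨x, hx⟩ + m)
      have hh : h = F a + A ⟨x, hx⟩ + (k + m) := by rw [hkm]; abel
      rw [hh]; abel
    obtain ⟨e1⟩ := orth_equiv_quot (LinearMap.range (F : H →ₗ[ℂ] H)) hF
    obtain ⟨e2⟩ := equiv_quot_aux (LinearMap.range (F : H →ₗ[ℂ] H)) hF f₁ hinj hsurj
    exact ⟨e1.trans e2.symm⟩
  · -- (range GF)ᗮ ≃L X × (range G)ᗮ
    set f₂ : (X × ((LinearMap.range (G : H →ₗ[ℂ] H))ᗮ : Submodule ℂ H)) →L[ℂ] H :=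
      X.subtypeL.comp (ContinuousLinearMap.fst ℂ X (LinearMap.range (G : H →ₗ[ℂ] H))ᗮ) +
        ((LinearMap.range (G : H →ₗ[ℂ] H))ᗮ).subtypeL.comp
          (ContinuousLinearMap.snd ℂ X (LinearMap.range (G : H →ₗ[ℂ] H))ᗮ) with hf₂def
    have hf₂ : ∀ w : X × ((LinearMap.range (G : H →ₗ[ℂ] H))ᗮ : Submodule ℂ H),
        f₂ w = (w.1 : H) + (w.2 : H) := fun w => rfl
    have hinj : ∀ w, f₂ w ∈ LinearMap.range ((G.comp F : H →L[ℂ] H) : H →ₗ[ℂ] H) → w = 0 := by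
      rintro ⟨x, v⟩ hw
      rw [hf₂] at hw
      have hxG : (x : H) ∈ LinearMap.range (G : H →ₗ[ℂ] H) := hXle x.2
      have hwG : (x : H) + (v : H) ∈ LinearMap.range (G : H →ₗ[ℂ] H) := by
        have hle : LinearMap.range ((G.comp F : H →L[ℂ] H) : H →ₗ[ℂ] H) ≤ LinearMap.range (G : H →ₗ[ℂ] H) := by
          rw [← hX2]; exact le_sup_left
        exact hle hw
      have hv0 : (v : H) = 0 := by
        have hv : (v : H) ∈ LinearMap.range (G : H →ₗ[ℂ] H) := by
          have := Submodule.sub_mem _ hwG hxG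
          simpa using this
        have : (v : H) ∈ LinearMap.range (G : H →ₗ[ℂ] H) ⊓ (LinearMap.range (G : H →ₗ[ℂ] H))ᗮ := ⟨hv, v.2⟩
        rw [Submodule.inf_orthogonal_eq_bot] at this
        exact this
      have hx0 : (x : H) = 0 := by
        have hx : (x : H) ∈ LinearMap.range ((G.comp F : H →L[ℂ] H) : H →ₗ[ℂ] H) := by
          rw [hv0, add_zero] at hw; exact hw
        have : (x : H) ∈ LinearMap.range ((G.comp F : H →L[ℂ] H) : H →ₗ[ℂ] H) ⊓ X := ⟨hx, x.2⟩
        rw [hX1.eq_bot] at this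
        exact this
      exact Prod.ext (Subtype.ext hx0) (Subtype.ext hv0)
    have hsurj : ∀ h : H, ∃ w, h - f₂ w ∈ LinearMap.range ((G.comp F : H →L[ℂ] H) : H →ₗ[ℂ] H) := by
      intro h
      have : h ∈ LinearMap.range (G : H →ₗ[ℂ] H) ⊔ (LinearMap.range (G : H →ₗ[ℂ] H))ᗮ := by
        rw [Submodule.sup_orthogonal_of_hasOrthogonalProjection]; trivial
      obtain ⟨g, hg, v, hv, rfl⟩ := Submodule.mem_sup.1 this
      rw [← hX2] at hg
      obtain ⟨q, hq, x, hx, rfl⟩ := Submodule.mem_sup.1 hg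
      refine ⟨(⟨x, hx⟩, ⟨v, hv⟩), ?_⟩
      rw [hf₂]
      show q + x + v - (x + v) ∈ _
      simpa using hq
    obtain ⟨e1⟩ := orth_equiv_quot (LinearMap.range ((G.comp F : H →L[ℂ] H) : H →ₗ[ℂ] H)) hGF
    obtain ⟨e2⟩ := equiv_quot_aux (LinearMap.range ((G.comp F : H →L[ℂ] H) : H →ₗ[ℂ] H)) hGF f₂ hinj hsurj
    exact ⟨e1.trans e2.symm⟩
end
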